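/- arXiv:1012.5744 — 5 statements merged into one kernel-verified Lean document; each statement's English description precedes it below -/
import Mathlib

section
/- For all integers i ≥ 0, k ≥ 1 and n ≥ 0, H_k(Δ^i S_{n+1})·H_{k−1}(Δ^{i+2} S_n) = H_k(Δ^{i+1} S_n)·Φ_k(Δ^i S_{n+1}) − H_{k−1}(Δ^{i+1} S_{n+1})·Φ_{k+1}(Δ^i S_n). -/
/-- Forward difference operator: `(fd u) n = u (n+1) - u n`.
Iterated differences are `fd^[i] u`. -/
def fd (u : ℕ → ℝ) : ℕ → ℝ := fun n => u (n + 1) - u n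

/-- Hankel-type determinant `H_k(u_n)` (depending on the fixed integer `m`):
the determinant of the `k × k` matrix whose `(i,j)` entry is `Δ^{i·m} u_{n+j}`.
By convention `H_k = 0` for `k < 0`, and `H_0 = 1` (empty determinant). -/
noncomputable def Hd (m : ℕ) (u : ℕ → ℝ) (k : ℤ) (n : ℕ) : ℝ :=
  if k < 0 then 0
  else Matrix.det (Matrix.of fun i j : Fin k.toNat => fd^[i.val * m] u (n + j.val))

/-- Determinant `Φ_k(u_n)`: the `k × k` determinant whose first row is
`(n, n+1, …, n+k−1)` and whose `i`-th row (`1 ≤ i ≤ k−1`) is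
`(Δ^{(i−1)m} u_n, …, Δ^{(i−1)m} u_{n+k−1})`. `Φ_0 = 1` (empty determinant). -/
noncomputable def Phi (m : ℕ) (u : ℕ → ℝ) (k : ℕ) (n : ℕ) : ℝ :=
  Matrix.det (Matrix.of fun i j : Fin k =>
    if i.val = 0 then ((n + j.val : ℕ) : ℝ) else fd^[(i.val - 1) * m] u (n + j.val))

namespace Stmt7Aux

lemma fd_shift (f : ℕ → ℝ) (j x : ℕ) :
    fd^[j] f (x + 1) = fd^[j] f x + fd^[j + 1] f x := by
  have h : fd^[j + 1] f = fd (fd^[j] f) := Function.iterate_succ_apply' fd j f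
  rw [h]
  simp [fd]

lemma fd_cast (j x : ℕ) :
    fd^[j] (fun y : ℕ => (y : ℝ)) x =
      if j = 0 then (x : ℝ) else if j = 1 then 1 else 0 := by
  have hzero : ∀ j x, fd^[j] (fun _ : ℕ => (0 : ℝ)) x = 0 := by
    intro j
    induction j with
    | zero => simp
    | succ j ih3 =>
      intro x
      rw [Function.iterate_succ_apply fd j _]
      have : fd (fun _ : ℕ => (0 : ℝ)) = fun _ => (0 : ℝ) := by funext y; simp [fd]
      rw [this]; exact ih3 x
  have hone : ∀ j x, fd^[j] (fun _ : ℕ => (1 : ℝ)) x = if j = 0 then 1 else 0 := by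
    intro j
    induction j with
    | zero => intro x; simp
    | succ j _ =>
      intro x
      rw [Function.iterate_succ_apply fd j _]
      have hz : fd (fun _ : ℕ => (1 : ℝ)) = fun _ => (0 : ℝ) := by funext y; simp [fd]
      rw [hz]
      simp [hzero]
  cases j with
  | zero => simp
  | succ j =>
    rw [Function.iterate_succ_apply fd j _]
    have hfd : fd (fun y : ℕ => (y : ℝ)) = fun _ => (1 : ℝ) := by
      funext y; simp [fd]
    rw [hfd, hone]
    rcases Nat.eq_zero_or_pos j with hj | hj
    · subst hj; simp
    · have h1 : j ≠ 0 := by omega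
      have h2 : j + 1 ≠ 0 := by omega
      have h3 : j + 1 ≠ 1 := by omega
      simp [h1, h2, h3]

lemma newton (f : ℕ → ℝ) : ∀ (j x : ℕ),
    f (x + j) = ∑ s ∈ Finset.range (j + 1), (j.choose s : ℝ) * fd^[s] f x := by
  intro j
  induction j with
  | zero => intro x; simp
  | succ j ih =>
    intro x
    have h1 : x + (j + 1) = (x + 1) + j := by omega
    rw [h1, ih (x + 1)]
    have h2 : ∀ s, fd^[s] f (x + 1) = fd^[s] f x + fd^[s + 1] f x := fun s => fd_shift f s x
    simp only [h2, mul_add]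
    rw [Finset.sum_add_distrib]
    have e1 : ∑ s ∈ Finset.range (j + 1), (j.choose s : ℝ) * fd^[s] f x
        = ∑ s ∈ Finset.range j, (j.choose (s + 1) : ℝ) * fd^[s + 1] f x + 1 * fd^[0] f x := by
      rw [Finset.sum_range_succ' (fun s => (j.choose s : ℝ) * fd^[s] f x) j]; simp
    have e2 : ∑ s ∈ Finset.range j, (j.choose (s + 1) : ℝ) * fd^[s + 1] f x
        = ∑ s ∈ Finset.range (j + 1), (j.choose (s + 1) : ℝ) * fd^[s + 1] f x := by
      rw [Finset.sum_range_succ]; simp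
    have e3 : ∑ s ∈ Finset.range (j + 1 + 1), ((j + 1).choose s : ℝ) * fd^[s] f x
        = ∑ s ∈ Finset.range (j + 1), ((j + 1).choose (s + 1) : ℝ) * fd^[s + 1] f x
          + 1 * fd^[0] f x := by
      rw [Finset.sum_range_succ' (fun s => ((j + 1).choose s : ℝ) * fd^[s] f x) (j + 1)]; simp
    have e4 : ∑ s ∈ Finset.range (j + 1), ((j + 1).choose (s + 1) : ℝ) * fd^[s + 1] f x
        = ∑ s ∈ Finset.range (j + 1), (j.choose (s + 1) : ℝ) * fd^[s + 1] f x
          + ∑ s ∈ Finset.range (j + 1), (j.choose s : ℝ) * fd^[s + 1] f x := by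
      rw [← Finset.sum_add_distrib]
      refine Finset.sum_congr rfl fun s _ => ?_
      rw [Nat.choose_succ_succ]
      push_cast
      ring
    rw [e1, e2, e3, e4]
    ring

/-- Column index map omitting `t`. -/
def om (t j : ℕ) : ℕ := if j < t then j else j + 1

lemma coe_succAbove {p : ℕ} (t : Fin (p + 1)) (j : Fin p) :
    ((t.succAbove j : Fin (p + 1)) : ℕ) = om t j := by
  rw [Fin.succAbove]
  rcases lt_or_ge (j.castSucc) t with h | h
  · rw [if_pos h, om, if_pos (by simpa [Fin.lt_iff_val_lt_val] using h)]
    simp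
  · rw [if_neg (not_lt.2 h), om, if_neg (by simpa [Fin.lt_iff_val_lt_val, Fin.le_iff_val_le_val, not_lt] using h)]
    simp

/-- Newton reduction: determinant with entries `f r (x+j)` equals determinant with
entries `Δ^j f r (x)`. -/
lemma det_newton (p : ℕ) (f : Fin p → ℕ → ℝ) (x : ℕ) :
    Matrix.det (Matrix.of fun r j : Fin p => f r (x + (j : ℕ))) =
      Matrix.det (Matrix.of fun r j : Fin p => fd^[(j : ℕ)] (f r) x) := by
  have hNP : (Matrix.of fun r j : Fin p => f r (x + (j : ℕ)))
      = (Matrix.of fun r s : Fin p => fd^[(s : ℕ)] (f r) x)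
        * (Matrix.of fun s j : Fin p => ((j : ℕ).choose (s : ℕ) : ℝ)) := by
    ext r j
    rw [Matrix.mul_apply]
    simp only [Matrix.of_apply]
    rw [newton (f r) (j : ℕ) x]
    rw [Fin.sum_univ_eq_sum_range (fun s => fd^[s] (f r) x * ((j : ℕ).choose s : ℝ)) p]
    rw [Finset.sum_subset (Finset.range_subset_range.2 (by omega : (j : ℕ) + 1 ≤ p))]
    · exact Finset.sum_congr rfl fun s _ => by ring
    · intro s hs hs2
      simp only [Finset.mem_range] at hs hs2
      rw [Nat.choose_eq_zero_of_lt (by omega)]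
      simp
  rw [hNP, Matrix.det_mul]
  have hP : Matrix.det (Matrix.of fun s j : Fin p => ((j : ℕ).choose (s : ℕ) : ℝ)) = 1 := by
    rw [Matrix.det_of_upperTriangular]
    · simp
    · intro s j h
      simp only [id] at h
      simp only [Matrix.of_apply]
      rw [Nat.choose_eq_zero_of_lt (by exact_mod_cast h)]
      simp
  rw [hP, mul_one]

/-- Shift-sum expansion: det of `G r j + G r (j+1)` over `Fin p` equals sum of
column-deleted minors of the `p × (p+1)` matrix `G`. -/
lemma det_shift_sum (p : ℕ) (G : Fin p → ℕ → ℝ) :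
    Matrix.det (Matrix.of fun r j : Fin p => G r (j : ℕ) + G r ((j : ℕ) + 1)) =
      ∑ t : Fin (p + 1), Matrix.det (Matrix.of fun r j : Fin p => G r (om (t : ℕ) (j : ℕ))) := by
  -- bordered matrix with alternating sign last row
  set Gb : Fin (p + 1) → ℕ → ℝ :=
    fun r j => if hr : (r : ℕ) < p then G ⟨r, hr⟩ j else (-1 : ℝ) ^ (p + j) with hGb
  set Aq : ℕ → Matrix (Fin (p + 1)) (Fin (p + 1)) ℝ :=
    fun q => Matrix.of fun r j =>
      if (j : ℕ) < q then Gb r (j : ℕ) + Gb r ((j : ℕ) + 1) else Gb r (j : ℕ) with hAq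
  have hstep : ∀ q, q < p → (Aq (q + 1)).det = (Aq q).det := by
    intro q hq
    have hupd : Aq (q + 1) = Matrix.updateCol (Aq q) ⟨q, by omega⟩
        (fun r => (Aq q) r ⟨q, by omega⟩ + (Aq q) r ⟨q + 1, by omega⟩) := by
      ext r j
      rw [Matrix.updateCol_apply]
      by_cases hj : j = (⟨q, by omega⟩ : Fin (p + 1))
      · subst hj
        simp only [hAq, Matrix.of_apply]
        rw [if_pos (by omega : q < q + 1), if_pos trivial, if_neg (lt_irrefl q),
          if_neg (by omega : ¬ (q + 1 < q))]
      · have hj' : (j : ℕ) ≠ q := fun h => hj (Fin.ext h)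
        rw [if_neg hj]
        simp only [hAq, Matrix.of_apply]
        by_cases h2 : (j : ℕ) < q
        · rw [if_pos h2, if_pos (by omega)]
        · rw [if_neg h2, if_neg (by omega)]
    rw [hupd]
    exact Matrix.det_updateCol_add_self (Aq q) (by
      intro h
      have := congrArg Fin.val h
      simp at this)
  have hall : ∀ q, q ≤ p → (Aq q).det = (Aq 0).det := by
    intro q
    induction q with
    | zero => intro _; rfl
    | succ q ih => intro h; rw [hstep q (by omega), ih (by omega)]
  -- expansion of Aq 0 = bordered matrix along last row
  have hA0 : (Aq 0).det = ∑ t : Fin (p + 1),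
      Matrix.det (Matrix.of fun r j : Fin p => G r (om (t : ℕ) (j : ℕ))) := by
    rw [Matrix.det_succ_row (Aq 0) (Fin.last p)]
    refine Finset.sum_congr rfl fun t _ => ?_
    have h1 : (Aq 0) (Fin.last p) t = (-1 : ℝ) ^ (p + (t : ℕ)) := by
      simp only [hAq, Matrix.of_apply, if_neg (by omega : ¬ ((t : ℕ) < 0))]
      simp only [hGb]
      rw [dif_neg (by simp)]
    have h2 : ((Aq 0).submatrix (Fin.last p).succAbove t.succAbove)
        = Matrix.of fun r j : Fin p => G r (om (t : ℕ) (j : ℕ)) := by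
      ext r j
      simp only [Matrix.submatrix_apply, hAq, Matrix.of_apply,
        if_neg (by omega : ¬ (((t.succAbove j : Fin (p+1)) : ℕ) < 0))]
      rw [coe_succAbove]
      simp only [hGb, Fin.succAbove_last]
      rw [dif_pos (by simp : ((r.castSucc : Fin (p+1)) : ℕ) < p)]
      simp only [Fin.coe_castSucc, Fin.eta]
    rw [h1, h2]
    have hvl : (Fin.last p : Fin (p + 1)).val = p := rfl
    rw [hvl]
    have hsq : (-1 : ℝ) ^ (p + (t : ℕ)) * (-1 : ℝ) ^ (p + (t : ℕ)) = 1 := by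
      rw [← pow_add, ← two_mul, pow_mul]
      norm_num
    rw [hsq, one_mul]
  -- expansion of Aq p along last row: only last column
  have hAp : (Aq p).det =
      Matrix.det (Matrix.of fun r j : Fin p => G r (j : ℕ) + G r ((j : ℕ) + 1)) := by
    rw [Matrix.det_succ_row (Aq p) (Fin.last p)]
    rw [Finset.sum_eq_single (Fin.last p)]
    · have h1 : (Aq p) (Fin.last p) (Fin.last p) = 1 := by
        simp only [hAq, Matrix.of_apply]
        rw [if_neg (by simp)]
        simp only [hGb]
        rw [dif_neg (by simp)]
        have hvl : (Fin.last p : Fin (p+1)).val = p := rfl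
        rw [hvl, ← two_mul, pow_mul]
        norm_num
      have h2 : ((Aq p).submatrix (Fin.last p).succAbove (Fin.last p).succAbove)
          = Matrix.of fun r j : Fin p => G r (j : ℕ) + G r ((j : ℕ) + 1) := by
        ext r j
        simp only [Matrix.submatrix_apply, hAq, Matrix.of_apply, Fin.succAbove_last]
        rw [if_pos (by simp : ((j.castSucc : Fin (p+1)) : ℕ) < p)]
        simp only [hGb]
        rw [dif_pos (by simp : ((r.castSucc : Fin (p+1)) : ℕ) < p)]
        simp only [Fin.coe_castSucc, Fin.eta]
        rw [dif_pos r.is_lt]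
      rw [h1, h2]
      have hvl : (Fin.last p : Fin (p + 1)).val = p := rfl
      have hs2 : ((-1 : ℝ)) ^ ((Fin.last p : Fin (p+1)).val + (Fin.last p : Fin (p+1)).val) = 1 := by
        rw [hvl, ← two_mul, pow_mul]
        norm_num
      rw [hs2, one_mul, one_mul]
    · intro t _ ht
      have h0 : (Aq p) (Fin.last p) t = 0 := by
        have htv : (t : ℕ) < p := by
          rcases Fin.lt_or_eq_of_le (Fin.le_last t) with h | h
          · exact h
          · exact absurd h ht
        simp only [hAq, Matrix.of_apply]
        rw [if_pos htv]
        simp only [hGb]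
        rw [dif_neg (by simp), dif_neg (by simp)]
        rw [show p + ((t : ℕ) + 1) = (p + (t : ℕ)) + 1 from rfl, pow_succ]
        ring
      rw [h0]
      ring
    · intro h
      exact absurd (Finset.mem_univ _) h
  rw [← hA0, ← hall p le_rfl, hAp]

variable (m : ℕ) (S : ℕ → ℝ) (i n : ℕ)

noncomputable def aa (r j : ℕ) : ℝ := fd^[j + (r * m + i)] S n

noncomputable def dt (p : ℕ) (σ : ℕ → ℕ) : ℝ :=
  Matrix.det (Matrix.of fun r j : Fin p => aa m S i n (r : ℕ) (σ (j : ℕ)))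

noncomputable def ee (j : ℕ) : ℝ := if j = 0 then (n : ℝ) else if j = 1 then 1 else 0

noncomputable def pt (p : ℕ) (σ : ℕ → ℕ) : ℝ :=
  Matrix.det (Matrix.of fun r j : Fin p =>
    if (r : ℕ) = 0 then ee n (σ (j : ℕ)) else aa m S i n ((r : ℕ) - 1) (σ (j : ℕ)))

lemma det_updateColumn_finset_sum {p : ℕ} {α : Type*} [DecidableEq α]
    (M : Matrix (Fin p) (Fin p) ℝ) (c : Fin p) (s : Finset α) (w : α → Fin p → ℝ) :
    Matrix.det (M.updateCol c (fun r => ∑ b ∈ s, w b r)) =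
      ∑ b ∈ s, Matrix.det (M.updateCol c (w b)) := by
  induction s using Finset.induction_on with
  | empty =>
    simp only [Finset.sum_empty]
    apply Matrix.det_eq_zero_of_column_eq_zero c
    intro r
    rw [Matrix.updateCol_self]
  | insert b s' hb ih =>
    rw [Finset.sum_insert hb, ← ih]
    rw [show (fun r => ∑ x ∈ insert b s', w x r)
        = (w b) + (fun r => ∑ x ∈ s', w x r) by
      funext r; rw [Finset.sum_insert hb]; rfl]
    rw [Matrix.det_updateCol_add]

lemma kernel (k r : ℕ) (hr : r < k) :
    ∑ j : Fin (k + 1), (-1 : ℝ) ^ (j : ℕ) * aa m S i n r (j : ℕ) * dt m S i n k (om (j : ℕ)) = 0 := by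
  set B : Matrix (Fin (k + 1)) (Fin (k + 1)) ℝ := Matrix.of fun r' j =>
    if (r' : ℕ) = 0 then aa m S i n r (j : ℕ) else aa m S i n ((r' : ℕ) - 1) (j : ℕ) with hB
  have h0 : B.det = 0 := by
    apply Matrix.det_zero_of_row_eq (i := 0) (j := ⟨r + 1, by omega⟩)
    · intro h
      have := congrArg Fin.val h
      simp at this
    · funext j
      simp only [hB, Matrix.of_apply, Fin.val_zero]
      norm_num
  have h2 : ∑ j : Fin (k + 1), (-1 : ℝ) ^ (j : ℕ) * aa m S i n r (j : ℕ) * dt m S i n k (om (j : ℕ))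
      = ∑ j : Fin (k + 1), (-1 : ℝ) ^ (j : ℕ) * B 0 j * (B.submatrix Fin.succ j.succAbove).det := by
    refine Finset.sum_congr rfl fun j _ => ?_
    have hB0 : B 0 j = aa m S i n r (j : ℕ) := by
      simp only [hB, Matrix.of_apply, Fin.val_zero]
      norm_num
    have hsub : B.submatrix Fin.succ j.succAbove
        = Matrix.of fun s j' : Fin k => aa m S i n (s : ℕ) (om (j : ℕ) (j' : ℕ)) := by
      ext s j'
      simp only [Matrix.submatrix_apply, hB, Matrix.of_apply]
      rw [if_neg (by simp [Fin.val_succ]), coe_succAbove]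
      simp [Fin.val_succ]
    rw [hB0, hsub]
    rfl
  rw [h2, ← Matrix.det_succ_row_zero, h0]


/-- The base matrix of `R01` (columns `2,3,...`). -/
noncomputable def Mq (Q : ℕ) : Matrix (Fin (Q + 1)) (Fin (Q + 1)) ℝ :=
  Matrix.of (fun r j : Fin (Q + 1) => aa m S i n (r : ℕ) ((j : ℕ) + 2))

lemma vanish (Q t : ℕ) (c : Fin (Q + 1)) (hcv : (c : ℕ) = t - 2) (ht2 : 2 ≤ t)
    (j : ℕ) (hj2 : 2 ≤ j) (hjt : j ≠ t) (hjk : j ≤ Q + 2) :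
    Matrix.det ((Mq m S i n Q).updateCol c (fun r => aa m S i n (r : ℕ) j)) = 0 := by
  have hlt : j - 2 < Q + 1 := by omega
  have hcne : (⟨j - 2, hlt⟩ : Fin (Q + 1)) ≠ c := by
    intro h
    have h2 := congrArg Fin.val h
    rw [hcv] at h2
    simp only at h2
    omega
  refine Matrix.det_zero_of_column_eq (i := (⟨j - 2, hlt⟩ : Fin (Q + 1))) (j := c)
    hcne fun r => ?_
  rw [Matrix.updateCol_ne hcne, Matrix.updateCol_self]
  show aa m S i n (r : ℕ) (((⟨j - 2, hlt⟩ : Fin (Q + 1)) : ℕ) + 2) = aa m S i n (r : ℕ) j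
  congr 1
  simp only
  omega

set_option maxHeartbeats 1000000 in
lemma starE (Q t : ℕ) (c : Fin (Q + 1)) (hcv : (c : ℕ) = t - 2) (ht2 : 2 ≤ t)
    (htk : t ≤ Q + 2) :
    ((-1 : ℝ) ^ t * dt m S i n (Q + 2) (om t)) * (Mq m S i n Q).det =
      (-(dt m S i n (Q + 2) (om 0))) *
          Matrix.det ((Mq m S i n Q).updateCol c (fun r => aa m S i n (r : ℕ) 0))
        + dt m S i n (Q + 2) (om 1) *
          Matrix.det ((Mq m S i n Q).updateCol c (fun r => aa m S i n (r : ℕ) 1)) := by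
  set tf : Fin (Q + 3) := ⟨t, by omega⟩ with htf
  set zf : Fin (Q + 3) := ⟨0, by omega⟩ with hzf
  set onef : Fin (Q + 3) := ⟨1, by omega⟩ with honef
  have hzfv : (zf : ℕ) = 0 := rfl
  have honefv : (onef : ℕ) = 1 := rfl
  have htfv : (tf : ℕ) = t := rfl
  have hker : ∀ r : Fin (Q + 1),
      (-1 : ℝ) ^ t * dt m S i n (Q + 2) (om t) * aa m S i n (r : ℕ) t
        = ∑ j ∈ Finset.univ.erase tf,
            (-((-1 : ℝ) ^ (j : ℕ) * dt m S i n (Q + 2) (om (j : ℕ)))) * aa m S i n (r : ℕ) (j : ℕ) := by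
    intro r
    have h := kernel m S i n (Q + 2) (r : ℕ) (by omega)
    rw [← Finset.add_sum_erase _ _ (Finset.mem_univ tf)] at h
    rw [htfv] at h
    have h2 := eq_neg_of_add_eq_zero_left h
    calc (-1 : ℝ) ^ t * dt m S i n (Q + 2) (om t) * aa m S i n (r : ℕ) t
        = (-1 : ℝ) ^ t * aa m S i n (r : ℕ) t * dt m S i n (Q + 2) (om t) := by ring
      _ = -∑ j ∈ Finset.univ.erase tf,
            (-1 : ℝ) ^ (j : ℕ) * aa m S i n (r : ℕ) (j : ℕ) * dt m S i n (Q + 2) (om (j : ℕ)) := h2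
      _ = _ := by
          rw [← Finset.sum_neg_distrib]
          exact Finset.sum_congr rfl fun j _ => by ring
  have hcol : (Mq m S i n Q).updateCol c (fun r => aa m S i n (r : ℕ) t)
      = Mq m S i n Q := by
    ext r j
    rw [Matrix.updateCol_apply]
    by_cases hj : j = c
    · rw [if_pos hj]
      show aa m S i n (r : ℕ) t = aa m S i n (r : ℕ) ((j : ℕ) + 2)
      have hjv : (j : ℕ) = t - 2 := by rw [hj]; exact hcv
      congr 1
      omega
    · rw [if_neg hj]
  have E1 : ((-1 : ℝ) ^ t * dt m S i n (Q + 2) (om t)) * (Mq m S i n Q).det =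
      ∑ j ∈ Finset.univ.erase tf,
        (-((-1 : ℝ) ^ (j : ℕ) * dt m S i n (Q + 2) (om (j : ℕ)))) *
          Matrix.det ((Mq m S i n Q).updateCol c (fun r => aa m S i n (r : ℕ) (j : ℕ))) := by
    calc ((-1 : ℝ) ^ t * dt m S i n (Q + 2) (om t)) * (Mq m S i n Q).det
        = Matrix.det ((Mq m S i n Q).updateCol c
            (((-1 : ℝ) ^ t * dt m S i n (Q + 2) (om t)) •
              (fun r : Fin (Q + 1) => aa m S i n (r : ℕ) t))) := by
          rw [Matrix.det_updateCol_smul, hcol]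
      _ = Matrix.det ((Mq m S i n Q).updateCol c
            (fun r => ∑ j ∈ Finset.univ.erase tf,
              (fun j (r : Fin (Q + 1)) => (-((-1 : ℝ) ^ (j : ℕ) * dt m S i n (Q + 2) (om (j : ℕ)))) *
                aa m S i n (r : ℕ) (j : ℕ)) j r)) := by
          congr 1
          apply congrArg
          funext r
          simp only [Pi.smul_apply, smul_eq_mul]
          rw [hker r]
      _ = ∑ j ∈ Finset.univ.erase tf, Matrix.det ((Mq m S i n Q).updateCol c
            (fun r => (-((-1 : ℝ) ^ (j : ℕ) * dt m S i n (Q + 2) (om (j : ℕ)))) *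
              aa m S i n (r : ℕ) (j : ℕ))) := by
          rw [det_updateColumn_finset_sum]
      _ = _ := by
          refine Finset.sum_congr rfl fun j _ => ?_
          rw [show (fun r : Fin (Q + 1) => (-((-1 : ℝ) ^ (j : ℕ) * dt m S i n (Q + 2) (om (j : ℕ)))) *
              aa m S i n (r : ℕ) (j : ℕ))
            = (-((-1 : ℝ) ^ (j : ℕ) * dt m S i n (Q + 2) (om (j : ℕ)))) •
              (fun r : Fin (Q + 1) => aa m S i n (r : ℕ) (j : ℕ)) from rfl]
          rw [Matrix.det_updateCol_smul]
  rw [E1]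
  have hnz : zf ≠ tf := by
    intro h; have h2 := congrArg Fin.val h; rw [hzfv, htfv] at h2; omega
  have hno : onef ≠ tf := by
    intro h; have h2 := congrArg Fin.val h; rw [honefv, htfv] at h2; omega
  have hsubset : ({zf, onef} : Finset (Fin (Q + 3))) ⊆ Finset.univ.erase tf := by
    intro x hx
    rcases Finset.mem_insert.1 hx with h | h
    · subst h; exact Finset.mem_erase.2 ⟨hnz, Finset.mem_univ _⟩
    · rw [Finset.mem_singleton] at h; subst h
      exact Finset.mem_erase.2 ⟨hno, Finset.mem_univ _⟩
  rw [← Finset.sum_subset hsubset]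
  · have hzo : zf ≠ onef := by
      intro h; have h2 := congrArg Fin.val h; rw [hzfv, honefv] at h2; omega
    rw [Finset.sum_pair hzo, hzfv, honefv]
    norm_num
  · intro x hx hnx
    have hx1 : x ≠ tf := (Finset.mem_erase.1 hx).1
    have hx2 : 2 ≤ (x : ℕ) := by
      by_contra hcon
      apply hnx
      have : (x : ℕ) = 0 ∨ (x : ℕ) = 1 := by omega
      rcases this with h | h
      · exact Finset.mem_insert.2 (Or.inl (Fin.ext (by rw [hzfv, h])))
      · exact Finset.mem_insert.2 (Or.inr (Finset.mem_singleton.2 (Fin.ext (by rw [honefv, h]))))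
    have hxt : (x : ℕ) ≠ t := by
      intro h
      exact hx1 (Fin.ext (by rw [htfv, h]))
    rw [vanish m S i n Q t c hcv ht2 (x : ℕ) hx2 hxt (by omega)]
    ring

set_option maxHeartbeats 1000000 in
lemma cyc (Q t w : ℕ) (c : Fin (Q + 1)) (hcv : (c : ℕ) = t - 2) (ht2 : 2 ≤ t)
    (htk : t ≤ Q + 2) (hw : w ≤ 1) :
    Matrix.det ((Mq m S i n Q).updateCol c (fun r => aa m S i n (r : ℕ) w))
      = (-1 : ℝ) ^ (t - 2) * dt m S i n (Q + 1) (fun j => om t (om (1 - w) j)) := by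
  set N : Matrix (Fin (Q + 1)) (Fin (Q + 1)) ℝ :=
    Matrix.of (fun r j : Fin (Q + 1) => aa m S i n (r : ℕ) (om t (om (1 - w) (j : ℕ)))) with hN
  have hsub2 : (Mq m S i n Q).updateCol c (fun r => aa m S i n (r : ℕ) w)
      = N.submatrix id (Fin.cycleRange c) := by
    ext r j
    rw [Matrix.submatrix_apply, id_eq]
    rcases lt_trichotomy j c with h | h | h
    · rw [Matrix.updateCol_ne (ne_of_lt h), Fin.cycleRange_of_lt h]
      have hv : ((j + 1 : Fin (Q + 1)) : ℕ) = (j : ℕ) + 1 :=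
        Fin.val_add_one_of_lt (lt_of_lt_of_le h c.le_last)
      show aa m S i n (r : ℕ) ((j : ℕ) + 2)
          = aa m S i n (r : ℕ) (om t (om (1 - w) ((j + 1 : Fin (Q + 1)) : ℕ)))
      rw [hv]
      have hjc : (j : ℕ) < (c : ℕ) := h
      rw [hcv] at hjc
      congr 1
      simp only [om]
      split_ifs <;> omega
    · subst h
      rw [Matrix.updateCol_self, Fin.cycleRange_self]
      show aa m S i n (r : ℕ) w = aa m S i n (r : ℕ) (om t (om (1 - w) ((0 : Fin (Q + 1)) : ℕ)))
      rw [Fin.val_zero]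
      congr 1
      simp only [om]
      split_ifs <;> omega
    · rw [Matrix.updateCol_ne (ne_of_gt h), Fin.cycleRange_of_gt h]
      show aa m S i n (r : ℕ) ((j : ℕ) + 2)
          = aa m S i n (r : ℕ) (om t (om (1 - w) (j : ℕ)))
      have hjc : (c : ℕ) < (j : ℕ) := h
      rw [hcv] at hjc
      congr 1
      simp only [om]
      split_ifs <;> omega
  rw [hsub2, Matrix.det_permute', Fin.sign_cycleRange]
  have hNdet : N.det = dt m S i n (Q + 1) (fun j => om t (om (1 - w) j)) := rfl
  rw [hNdet, hcv]
  norm_num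

set_option maxHeartbeats 1000000 in
lemma star (q t : ℕ) (ht2 : 2 ≤ t) (htk : t ≤ q + 1) :
    dt m S i n (q + 1) (om t) * dt m S i n q (fun j => j + 2) =
      dt m S i n (q + 1) (om 1) * dt m S i n q (fun j => om t (j + 1)) -
        dt m S i n (q + 1) (om 0) * dt m S i n q (fun j => om t (om 1 j)) := by
  obtain ⟨Q, rfl⟩ : ∃ Q, q = Q + 1 := ⟨q - 1, by omega⟩
  have htk' : t ≤ Q + 2 := by omega
  set c : Fin (Q + 1) := ⟨t - 2, by omega⟩ with hc
  have hcv : (c : ℕ) = t - 2 := rfl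
  have hMdet : (Mq m S i n Q).det = dt m S i n (Q + 1) (fun j => j + 2) := rfl
  have hE := starE m S i n Q t c hcv ht2 htk'
  have hY0 := cyc m S i n Q t 0 c hcv ht2 htk' (by omega)
  have hY1 := cyc m S i n Q t 1 c hcv ht2 htk' (by omega)
  have hfun : (fun j => om t (om (1 - 1) j)) = (fun j => om t (j + 1)) := by
    funext j
    simp [om]
  rw [hfun] at hY1
  have hpow : (-1 : ℝ) ^ (t - 2) = (-1) ^ t := by
    have h2 : t - 2 + 2 = t := by omega
    calc (-1 : ℝ) ^ (t - 2) = (-1) ^ (t - 2) * (-1) ^ 2 := by norm_num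
      _ = (-1) ^ (t - 2 + 2) := (pow_add (-1 : ℝ) (t - 2) 2).symm
      _ = (-1) ^ t := by rw [h2]
  have hfun0 : (fun j => om t (om (1 - 0) j)) = (fun j => om t (om 1 j)) := by norm_num
  rw [hY0, hY1, hpow, hMdet, hfun0] at hE
  have hfin : (-1 : ℝ) ^ t * (dt m S i n (Q + 1 + 1) (om t) * dt m S i n (Q + 1) (fun j => j + 2))
      = (-1 : ℝ) ^ t *
          (dt m S i n (Q + 1 + 1) (om 1) * dt m S i n (Q + 1) (fun j => om t (j + 1))
            - dt m S i n (Q + 1 + 1) (om 0) * dt m S i n (Q + 1) (fun j => om t (om 1 j))) := by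
    calc (-1 : ℝ) ^ t * (dt m S i n (Q + 1 + 1) (om t) * dt m S i n (Q + 1) (fun j => j + 2))
        = ((-1 : ℝ) ^ t * dt m S i n (Q + 2) (om t)) * dt m S i n (Q + 1) (fun j => j + 2) := by
          ring
      _ = _ := by rw [hE]; ring
  exact mul_left_cancel₀ (pow_ne_zero t (by norm_num : (-1 : ℝ) ≠ 0)) hfin

lemma ee_eq_zero (j : ℕ) (h : 2 ≤ j) : ee n j = 0 := by
  simp only [ee]
  rw [if_neg (by omega), if_neg (by omega)]

lemma dt_congr (p : ℕ) {σ σ' : ℕ → ℕ} (h : ∀ j, σ j = σ' j) :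
    dt m S i n p σ = dt m S i n p σ' := by
  rw [funext h]

lemma pt_expand (q : ℕ) (σ : ℕ → ℕ) :
    pt m S i n (q + 1) σ = ∑ j : Fin (q + 1),
      (-1 : ℝ) ^ (j : ℕ) * ee n (σ (j : ℕ)) * dt m S i n q (fun j' => σ (om (j : ℕ) j')) := by
  rw [pt, Matrix.det_succ_row_zero]
  refine Finset.sum_congr rfl fun j _ => ?_
  have hB0 : (Matrix.of fun r j : Fin (q + 1) =>
      if (r : ℕ) = 0 then ee n (σ (j : ℕ)) else aa m S i n ((r : ℕ) - 1) (σ (j : ℕ))) 0 j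
      = ee n (σ (j : ℕ)) := by
    simp only [Matrix.of_apply, Fin.val_zero]
    norm_num
  have hsub : ((Matrix.of fun r j : Fin (q + 1) =>
      if (r : ℕ) = 0 then ee n (σ (j : ℕ)) else aa m S i n ((r : ℕ) - 1) (σ (j : ℕ))).submatrix
        Fin.succ j.succAbove)
      = Matrix.of fun s j' : Fin q => aa m S i n (s : ℕ) (σ (om (j : ℕ) (j' : ℕ))) := by
    ext s j'
    simp only [Matrix.submatrix_apply, Matrix.of_apply]
    rw [if_neg (by simp [Fin.val_succ]), coe_succAbove]
    simp [Fin.val_succ]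
  rw [hB0, hsub]
  rfl

lemma P0 (q : ℕ) : pt m S i n (q + 1) (om 0) = dt m S i n q (fun j => j + 2) := by
  rw [pt_expand]
  rw [← Finset.sum_subset (Finset.subset_univ ({0} : Finset (Fin (q + 1))))]
  · rw [Finset.sum_singleton]
    have h0 : ((0 : Fin (q + 1)) : ℕ) = 0 := rfl
    rw [h0]
    have h1 : om 0 0 = 1 := rfl
    rw [h1]
    have h2 : ee n 1 = 1 := by simp [ee]
    rw [h2]
    rw [dt_congr m S i n q (fun j => by simp [om] : ∀ j, om 0 (om 0 j) = j + 2)]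
    norm_num
  · intro x _ hx
    have hxv : (x : ℕ) ≠ 0 := by
      intro h; exact hx (Finset.mem_singleton.2 (Fin.ext h))
    rw [ee_eq_zero n (om 0 (x : ℕ)) (by simp only [om]; split_ifs <;> omega)]
    ring

lemma P1 (q : ℕ) : pt m S i n (q + 1) (om 1) = (n : ℝ) * dt m S i n q (fun j => j + 2) := by
  rw [pt_expand]
  rw [← Finset.sum_subset (Finset.subset_univ ({0} : Finset (Fin (q + 1))))]
  · rw [Finset.sum_singleton]
    have h0 : ((0 : Fin (q + 1)) : ℕ) = 0 := rfl
    rw [h0]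
    have h1 : om 1 0 = 0 := rfl
    rw [h1]
    have h2 : ee n 0 = (n : ℝ) := by simp [ee]
    rw [h2]
    rw [dt_congr m S i n q (fun j => by simp [om] : ∀ j, om 1 (om 0 j) = j + 2)]
    norm_num
  · intro x _ hx
    have hxv : (x : ℕ) ≠ 0 := by
      intro h; exact hx (Finset.mem_singleton.2 (Fin.ext h))
    rw [ee_eq_zero n (om 1 (x : ℕ)) (by simp only [om]; split_ifs <;> omega)]
    ring

lemma Pt (q t : ℕ) (ht2 : 2 ≤ t) (htk : t ≤ q + 1) :
    pt m S i n (q + 1) (om t) =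
      (n : ℝ) * dt m S i n q (fun j => om t (j + 1)) -
        dt m S i n q (fun j => om t (om 1 j)) := by
  have hq : 1 ≤ q := by omega
  set zf : Fin (q + 1) := ⟨0, by omega⟩ with hzf
  set onef : Fin (q + 1) := ⟨1, by omega⟩ with honef
  rw [pt_expand]
  rw [← Finset.sum_subset (Finset.subset_univ ({zf, onef} : Finset (Fin (q + 1))))]
  · have hzo : zf ≠ onef := by
      intro h; have h2 := congrArg Fin.val h; simp [hzf, honef] at h2
    rw [Finset.sum_pair hzo]
    have h0 : (zf : ℕ) = 0 := rfl
    have h1 : (onef : ℕ) = 1 := rfl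
    rw [h0, h1]
    have e1 : om t 0 = 0 := by simp only [om]; rw [if_pos (by omega)]
    have e2 : om t 1 = 1 := by simp only [om]; rw [if_pos (by omega)]
    rw [e1, e2]
    have e3 : ee n 0 = (n : ℝ) := by simp [ee]
    have e4 : ee n 1 = 1 := by simp [ee]
    rw [e3, e4]
    have e5 : ∀ j, om t (om 0 j) = om t (j + 1) := fun j => by simp [om]
    rw [dt_congr m S i n q e5]
    ring
  · intro x _ hx
    have hxv : 2 ≤ (x : ℕ) := by
      by_contra hcon
      apply hx
      have : (x : ℕ) = 0 ∨ (x : ℕ) = 1 := by omega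
      rcases this with h | h
      · exact Finset.mem_insert.2 (Or.inl (Fin.ext h))
      · exact Finset.mem_insert.2 (Or.inr (Finset.mem_singleton.2 (Fin.ext h)))
    rw [ee_eq_zero n (om t (x : ℕ)) (by simp only [om]; split_ifs <;> omega)]
    ring

lemma Fq (q : ℕ) : pt m S i n (q + 2) (fun j => j) =
    (n : ℝ) * dt m S i n (q + 1) (om 0) - dt m S i n (q + 1) (om 1) := by
  set zf : Fin (q + 2) := ⟨0, by omega⟩ with hzf
  set onef : Fin (q + 2) := ⟨1, by omega⟩ with honef
  rw [pt_expand]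
  rw [← Finset.sum_subset (Finset.subset_univ ({zf, onef} : Finset (Fin (q + 2))))]
  · have hzo : zf ≠ onef := by
      intro h; have h2 := congrArg Fin.val h; simp [hzf, honef] at h2
    rw [Finset.sum_pair hzo]
    have h0 : (zf : ℕ) = 0 := rfl
    have h1 : (onef : ℕ) = 1 := rfl
    rw [h0, h1]
    have e3 : ee n 0 = (n : ℝ) := by simp [ee]
    have e4 : ee n 1 = 1 := by simp [ee]
    rw [e3, e4]
    have e5 : ∀ j, om 0 j = om 0 j := fun _ => rfl
    ring
  · intro x _ hx
    have hxv : 2 ≤ (x : ℕ) := by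
      by_contra hcon
      apply hx
      have : (x : ℕ) = 0 ∨ (x : ℕ) = 1 := by omega
      rcases this with h | h
      · exact Finset.mem_insert.2 (Or.inl (Fin.ext h))
      · exact Finset.mem_insert.2 (Or.inr (Finset.mem_singleton.2 (Fin.ext h)))
    rw [ee_eq_zero n (x : ℕ) (by omega)]
    ring

lemma fd_exp_congr {a b : ℕ} (h : a = b) (f : ℕ → ℝ) (x : ℕ) : fd^[a] f x = fd^[b] f x := by
  rw [h]

/-! ### Reductions of `Hd` and `Phi` -/

lemma hd_unfold (u : ℕ → ℝ) (k x : ℕ) :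
    Hd m u (k : ℤ) x =
      Matrix.det (Matrix.of fun r j : Fin k => fd^[(r : ℕ) * m] u (x + (j : ℕ))) := by
  rw [Hd, if_neg (not_lt.2 (Int.natCast_nonneg k))]
  rfl

lemma red_base (p s : ℕ) :
    Matrix.det (Matrix.of fun r j : Fin p => fd^[(r : ℕ) * m] (fd^[i + s] S) (n + (j : ℕ)))
      = dt m S i n p (fun j => j + s) := by
  have h1 : (Matrix.of fun r j : Fin p => fd^[(r : ℕ) * m] (fd^[i + s] S) (n + (j : ℕ)))
      = Matrix.of fun r j : Fin p =>
          (fun x => fd^[(r : ℕ) * m + (i + s)] S x) (n + (j : ℕ)) := by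
    ext r j
    simp only [Matrix.of_apply]
    rw [Function.iterate_add_apply fd ((r : ℕ) * m) (i + s) S]
  rw [h1, det_newton p (fun r => fun x => fd^[(r : ℕ) * m + (i + s)] S x) n]
  rw [dt]
  congr 1
  ext r j
  simp only [Matrix.of_apply, aa]
  rw [← Function.iterate_add_apply]
  exact fd_exp_congr (by omega) S n

lemma red_shift (p s : ℕ) :
    Matrix.det (Matrix.of fun r j : Fin p => fd^[(r : ℕ) * m] (fd^[i + s] S) ((n + 1) + (j : ℕ)))
      = ∑ t : Fin (p + 1), dt m S i n p (fun j => om (t : ℕ) j + s) := by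
  have h1 : (Matrix.of fun r j : Fin p => fd^[(r : ℕ) * m] (fd^[i + s] S) ((n + 1) + (j : ℕ)))
      = Matrix.of fun r j : Fin p =>
          (fun x => fd^[(r : ℕ) * m + (i + s)] S x) ((n + 1) + (j : ℕ)) := by
    ext r j
    simp only [Matrix.of_apply]
    rw [Function.iterate_add_apply fd ((r : ℕ) * m) (i + s) S]
  rw [h1, det_newton p (fun r => fun x => fd^[(r : ℕ) * m + (i + s)] S x) (n + 1)]
  have h2 : (Matrix.of fun r j : Fin p =>
        fd^[(j : ℕ)] (fun x => fd^[(r : ℕ) * m + (i + s)] S x) (n + 1))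
      = Matrix.of fun r j : Fin p =>
          (fun (r : Fin p) (jn : ℕ) => fd^[jn] (fun x => fd^[(r : ℕ) * m + (i + s)] S x) n) r (j : ℕ)
          + (fun (r : Fin p) (jn : ℕ) => fd^[jn] (fun x => fd^[(r : ℕ) * m + (i + s)] S x) n) r ((j : ℕ) + 1) := by
    ext r j
    simp only [Matrix.of_apply]
    rw [fd_shift]
  rw [h2, det_shift_sum p
    (fun (r : Fin p) (jn : ℕ) => fd^[jn] (fun x => fd^[(r : ℕ) * m + (i + s)] S x) n)]
  refine Finset.sum_congr rfl fun t _ => ?_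
  rw [dt]
  congr 1
  ext r j
  simp only [Matrix.of_apply, aa]
  rw [← Function.iterate_add_apply]
  exact fd_exp_congr (by omega) S n

lemma red1 (q : ℕ) : Hd m (fd^[i] S) ((q + 1 : ℕ) : ℤ) (n + 1)
    = ∑ t : Fin (q + 2), dt m S i n (q + 1) (om (t : ℕ)) := by
  rw [hd_unfold]
  have h := red_shift m S i n (q + 1) 0
  simp only [Nat.add_zero] at h
  rw [h]

lemma red2 (q : ℕ) : Hd m (fd^[i + 2] S) (((q + 1 : ℕ) : ℤ) - 1) n
    = dt m S i n q (fun j => j + 2) := by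
  have hc : ((q + 1 : ℕ) : ℤ) - 1 = ((q : ℕ) : ℤ) := by push_cast; ring
  rw [hc, hd_unfold, red_base]

lemma red3 (q : ℕ) : Hd m (fd^[i + 1] S) ((q + 1 : ℕ) : ℤ) n
    = dt m S i n (q + 1) (om 0) := by
  rw [hd_unfold, red_base]
  exact dt_congr m S i n _ fun j => by simp [om]

lemma red5 (q : ℕ) : Hd m (fd^[i + 1] S) (((q + 1 : ℕ) : ℤ) - 1) (n + 1)
    = ∑ t : Fin (q + 1), dt m S i n q (fun j => om (t : ℕ) j + 1) := by
  have hc : ((q + 1 : ℕ) : ℤ) - 1 = ((q : ℕ) : ℤ) := by push_cast; ring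
  rw [hc, hd_unfold, red_shift]

/-- Phi as a matrix with functional rows. -/
lemma phi_entry (u : ℕ → ℝ) (k x : ℕ) :
    Phi m u k x = Matrix.det (Matrix.of fun r j : Fin k =>
      (if (r : ℕ) = 0 then (fun y : ℕ => (y : ℝ)) else fd^[((r : ℕ) - 1) * m] u) (x + (j : ℕ))) := by
  rw [Phi]
  congr 1
  ext r j
  simp only [Matrix.of_apply]
  rw [apply_ite (fun g : ℕ → ℝ => g (x + (j : ℕ)))]

lemma phi_row (r j : ℕ) :
    fd^[j] ((if r = 0 then (fun y : ℕ => (y : ℝ)) else fd^[(r - 1) * m] (fd^[i] S))) n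
      = if r = 0 then ee n j else aa m S i n (r - 1) j := by
  rw [apply_ite (fun g : ℕ → ℝ => fd^[j] g n)]
  by_cases h : r = 0
  · rw [if_pos h, if_pos h, fd_cast]
    rfl
  · rw [if_neg h, if_neg h, aa, ← Function.iterate_add_apply, ← Function.iterate_add_apply]
    exact fd_exp_congr (by omega) S n

lemma red6 (q : ℕ) : Phi m (fd^[i] S) (q + 2) n = pt m S i n (q + 2) (fun j => j) := by
  rw [phi_entry, det_newton, pt]
  congr 1
  ext r j
  simp only [Matrix.of_apply]
  exact phi_row m S i n (r : ℕ) (j : ℕ)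

lemma red4 (q : ℕ) : Phi m (fd^[i] S) (q + 1) (n + 1)
    = ∑ t : Fin (q + 2), pt m S i n (q + 1) (om (t : ℕ)) := by
  rw [phi_entry, det_newton]
  have h2 : (Matrix.of fun r j : Fin (q + 1) =>
        fd^[(j : ℕ)] ((if (r : ℕ) = 0 then (fun y : ℕ => (y : ℝ))
          else fd^[((r : ℕ) - 1) * m] (fd^[i] S))) (n + 1))
      = Matrix.of fun r j : Fin (q + 1) =>
          (fun (r : Fin (q + 1)) (jn : ℕ) =>
            fd^[jn] ((if (r : ℕ) = 0 then (fun y : ℕ => (y : ℝ))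
              else fd^[((r : ℕ) - 1) * m] (fd^[i] S))) n) r (j : ℕ)
          + (fun (r : Fin (q + 1)) (jn : ℕ) =>
            fd^[jn] ((if (r : ℕ) = 0 then (fun y : ℕ => (y : ℝ))
              else fd^[((r : ℕ) - 1) * m] (fd^[i] S))) n) r ((j : ℕ) + 1) := by
    ext r j
    simp only [Matrix.of_apply]
    rw [fd_shift]
  rw [h2, det_shift_sum (q + 1)
    (fun (r : Fin (q + 1)) (jn : ℕ) =>
      fd^[jn] ((if (r : ℕ) = 0 then (fun y : ℕ => (y : ℝ))
        else fd^[((r : ℕ) - 1) * m] (fd^[i] S))) n)]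
  refine Finset.sum_congr rfl fun t _ => ?_
  rw [pt]
  congr 1
  ext r j
  simp only [Matrix.of_apply]
  exact phi_row m S i n (r : ℕ) (om (t : ℕ) (j : ℕ))

/-! ### Final assembly -/

theorem main (q : ℕ) :
    Hd m (fd^[i] S) ((q + 1 : ℕ) : ℤ) (n + 1) * Hd m (fd^[i + 2] S) (((q + 1 : ℕ) : ℤ) - 1) n =
      Hd m (fd^[i + 1] S) ((q + 1 : ℕ) : ℤ) n * Phi m (fd^[i] S) (q + 1) (n + 1) -
        Hd m (fd^[i + 1] S) (((q + 1 : ℕ) : ℤ) - 1) (n + 1) * Phi m (fd^[i] S) ((q + 1) + 1) n := by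
  rw [red1, red2, red3, red4, red5, red6]
  set RR : Fin (q + 2) → ℝ := fun t =>
    if (t : ℕ) = 0 then 0 else dt m S i n q (fun j => om (t : ℕ) (j + 1)) with hRR
  have hC : ∀ t : Fin (q + 2),
      dt m S i n (q + 1) (om (t : ℕ)) * dt m S i n q (fun j => j + 2)
        = dt m S i n (q + 1) (om 0) * pt m S i n (q + 1) (om (t : ℕ))
          - RR t * pt m S i n (q + 2) (fun j => j) := by
    intro t
    rcases Nat.lt_or_ge (t : ℕ) 2 with h2 | h2
    · have : (t : ℕ) = 0 ∨ (t : ℕ) = 1 := by omega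
      rcases this with h | h
      · have hRR0 : RR t = 0 := by rw [hRR]; simp [h]
        rw [hRR0, h, P0]
        ring
      · have hRR1 : RR t = dt m S i n q (fun j => j + 2) := by
          rw [hRR]
          simp only [h]
          rw [if_neg one_ne_zero]
          exact dt_congr m S i n q fun j => by simp [om]
        rw [hRR1, h, P1, Fq]
        ring
    · have htk : (t : ℕ) ≤ q + 1 := by omega
      rw [star m S i n q (t : ℕ) h2 htk, Pt m S i n q (t : ℕ) h2 htk, Fq]
      simp only [hRR, if_neg (by omega : ¬ ((t : ℕ) = 0))]
      ring
  have hsum := Finset.sum_congr rfl fun t (_ : t ∈ Finset.univ) => hC t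
  rw [← Finset.sum_mul] at hsum
  rw [hsum]
  rw [Finset.sum_sub_distrib, ← Finset.mul_sum, ← Finset.sum_mul]
  have hRRsum : ∑ t : Fin (q + 2), RR t
      = ∑ t : Fin (q + 1), dt m S i n q (fun j => om (t : ℕ) j + 1) := by
    rw [Fin.sum_univ_succ]
    have h0 : RR 0 = 0 := by simp [hRR]
    rw [h0, zero_add]
    refine Finset.sum_congr rfl fun t _ => ?_
    simp only [hRR, Fin.val_succ, if_neg (by omega : ¬ ((t : ℕ) + 1 = 0))]
    exact dt_congr m S i n q fun j => by simp only [om]; split_ifs <;> omega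
  rw [hRRsum]

end Stmt7Aux

/-- Lemma 4: for `i ≥ 0`, `k ≥ 1`, `n ≥ 0`: `H_k(Δ^i S_{n+1}) H_{k−1}(Δ^{i+2}S_n)
= H_k(Δ^{i+1}S_n) Φ_k(Δ^i S_{n+1}) − H_{k−1}(Δ^{i+1}S_{n+1}) Φ_{k+1}(Δ^i S_n)`. -/
theorem stmt_7 (m : ℕ) (hm : 1 ≤ m) (S : ℕ → ℝ) (i k n : ℕ) (hk : 1 ≤ k) :
    Hd m (fd^[i] S) (k : ℤ) (n + 1) * Hd m (fd^[i + 2] S) ((k : ℤ) - 1) n =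
      Hd m (fd^[i + 1] S) (k : ℤ) n * Phi m (fd^[i] S) k (n + 1) -
        Hd m (fd^[i + 1] S) ((k : ℤ) - 1) (n + 1) * Phi m (fd^[i] S) (k + 1) n := by
  obtain ⟨q, rfl⟩ : ∃ q, k = q + 1 := ⟨k - 1, by omega⟩
  exact Stmt7Aux.main m S i n q
end

section
/- For all integers k ≥ 1 and n ≥ 0, H_k(ΔS_n)·H_{k−2}(Δ^{m+1} S_{n+1}) = H_{k−1}(Δ^{m+1} S_{n+1})·H_{k−1}(ΔS_n) − H_{k−1}(Δ^{m+1} S_n)·H_{k−1}(ΔS_{n+1}). -/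
open Matrix Polynomial

def inn {n : ℕ} (i : Fin n) : Fin (n + 2) := i.succ.castSucc

lemma inn_inj {n : ℕ} : Function.Injective (inn (n := n)) :=
  fun _ _ h => Fin.succ_injective _ (Fin.castSucc_injective _ h)

lemma corner_det {F : Type*} [Field F] {n : ℕ}
    (B : Matrix (Fin (n+1)) (Fin (n+1)) F)
    (M : Matrix (Fin n) (Fin n) F) [Invertible M]
    (p : F) (q r : Fin n → F)
    (e f : Fin 1 ⊕ Fin n ≃ Fin (n+1))
    (h : B.submatrix e f = Matrix.fromBlocks (Matrix.of fun _ _ => p)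
      (Matrix.of fun _ j => q j) (Matrix.of fun i _ => r i) M) :
    B.det = ((Equiv.Perm.sign (e.trans f.symm) : ℤ) : F) *
      (M.det * (p - ∑ j, (∑ i, q i * (⅟M) i j) * r j)) := by
  have h1 : B.submatrix e f = (B.submatrix f f).submatrix (e.trans f.symm) id := by
    ext i j; simp
  have h2 : (B.submatrix e f).det
      = ((Equiv.Perm.sign (e.trans f.symm) : ℤ) : F) * B.det := by
    rw [h1, Matrix.det_permute, Matrix.det_submatrix_equiv_self]
  have hsq : ((Equiv.Perm.sign (e.trans f.symm) : ℤ) : F) *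
      ((Equiv.Perm.sign (e.trans f.symm) : ℤ) : F) = 1 := by
    rcases Int.units_eq_one_or (Equiv.Perm.sign (e.trans f.symm)) with h' | h' <;>
      simp [h']
  have h3 : (B.submatrix e f).det = M.det * (p - ∑ j, (∑ i, q i * (⅟M) i j) * r j) := by
    rw [h, Matrix.det_fromBlocks₂₂]
    congr 1
    rw [Matrix.det_fin_one]
    simp [Matrix.mul_apply, Matrix.sub_apply]
  rw [← h3, h2, ← mul_assoc, hsq, one_mul]

lemma dj_aux {F : Type*} [Field F] {n : ℕ}
    (A : Matrix (Fin (n+2)) (Fin (n+2)) F)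
    (hM : (A.submatrix inn inn).det ≠ 0) :
    A.det * (A.submatrix inn inn).det =
      (A.submatrix Fin.castSucc Fin.castSucc).det * (A.submatrix Fin.succ Fin.succ).det -
      (A.submatrix Fin.castSucc Fin.succ).det * (A.submatrix Fin.succ Fin.castSucc).det := by
  set M := A.submatrix (inn (n := n)) inn with hMdef
  haveI : Invertible M := M.invertibleOfIsUnitDet (isUnit_iff_ne_zero.2 hM)
  set c : Fin 2 → Fin (n+2) := ![0, Fin.last _] with hc
  set s : Fin 2 → Fin 2 → F := fun x y =>
    A (c x) (c y) - ∑ j, (∑ i, A (c x) (inn i) * (⅟M) i j) * A (inn j) (c y) with hs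
  have hbij0 : Function.Bijective (Sum.elim (fun _ : Fin 1 => (0 : Fin (n+1))) Fin.succ) := by
    rw [Fintype.bijective_iff_injective_and_card]
    constructor
    · rintro (x | x) (y | y) h
      · simp [Subsingleton.elim x y]
      · exact absurd h.symm (Fin.succ_ne_zero _)
      · exact absurd h (Fin.succ_ne_zero _)
      · simpa using Fin.succ_injective _ h
    · simp [add_comm]
  have hbijL : Function.Bijective (Sum.elim (fun _ : Fin 1 => Fin.last n) Fin.castSucc) := by
    rw [Fintype.bijective_iff_injective_and_card]
    constructor
    · rintro (x | x) (y | y) h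
      · simp [Subsingleton.elim x y]
      · exact absurd h.symm (Fin.ne_last_of_lt (Fin.castSucc_lt_last y))
      · exact absurd h.symm (Fin.ne_last_of_lt (Fin.castSucc_lt_last x)).symm
      · simpa using Fin.castSucc_injective _ h
    · simp [add_comm]
  have hbij2 : Function.Bijective (Sum.elim c (inn (n := n))) := by
    rw [Fintype.bijective_iff_injective_and_card]
    constructor
    · rintro (x | x) (y | y) h
      · fin_cases x <;> fin_cases y <;>
          first
          | rfl
          | (exact absurd (congrArg Fin.val h) (by simp [hc]))
      · exfalso
        fin_cases x <;> simp [hc, inn, Fin.ext_iff] at h <;> (have := y.isLt; omega)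
      · exfalso
        fin_cases y <;> simp [hc, inn, Fin.ext_iff] at h <;> (have := x.isLt; omega)
      · simpa using inn_inj h
    · simp [add_comm]
  set e0 : Fin 1 ⊕ Fin n ≃ Fin (n+1) := Equiv.ofBijective _ hbij0 with he0
  set eL : Fin 1 ⊕ Fin n ≃ Fin (n+1) := Equiv.ofBijective _ hbijL with heL
  have hTL : (A.submatrix Fin.castSucc Fin.castSucc).det =
      ((Equiv.Perm.sign (e0.trans e0.symm) : ℤ) : F) * (M.det * s 0 0) := by
    apply corner_det _ M _ _ _ e0 e0
    ext i j
    rcases i with i | i <;> rcases j with j | j <;>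
      simp [hMdef, hc, inn, he0, Matrix.submatrix_apply]
  have hBR : (A.submatrix Fin.succ Fin.succ).det =
      ((Equiv.Perm.sign (eL.trans eL.symm) : ℤ) : F) * (M.det * s 1 1) := by
    apply corner_det _ M _ _ _ eL eL
    ext i j
    rcases i with i | i <;> rcases j with j | j <;>
      simp [hMdef, hc, inn, heL, Matrix.submatrix_apply, - Fin.castSucc_succ, Fin.succ_castSucc]
  have hTR : (A.submatrix Fin.castSucc Fin.succ).det =
      ((Equiv.Perm.sign (e0.trans eL.symm) : ℤ) : F) * (M.det * s 0 1) := by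
    apply corner_det _ M _ _ _ e0 eL
    ext i j
    rcases i with i | i <;> rcases j with j | j <;>
      simp [hMdef, hc, inn, he0, heL, Matrix.submatrix_apply, - Fin.castSucc_succ, Fin.succ_castSucc]
  have hBL : (A.submatrix Fin.succ Fin.castSucc).det =
      ((Equiv.Perm.sign (eL.trans e0.symm) : ℤ) : F) * (M.det * s 1 0) := by
    apply corner_det _ M _ _ _ eL e0
    ext i j
    rcases i with i | i <;> rcases j with j | j <;>
      simp [hMdef, hc, inn, he0, heL, Matrix.submatrix_apply, - Fin.castSucc_succ, Fin.succ_castSucc]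
  have hsign : Equiv.Perm.sign (eL.trans e0.symm) = Equiv.Perm.sign (e0.trans eL.symm) := by
    have : eL.trans e0.symm = (e0.trans eL.symm).symm := by
      ext x; simp
    rw [this, Equiv.Perm.sign_symm]
  have hA : A.det = M.det * (s 0 0 * s 1 1 - s 0 1 * s 1 0) := by
    have h2 : A.submatrix (Equiv.ofBijective _ hbij2) (Equiv.ofBijective _ hbij2) =
        Matrix.fromBlocks (Matrix.of fun x y => A (c x) (c y))
          (Matrix.of fun x j => A (c x) (inn j))
          (Matrix.of fun i y => A (inn i) (c y)) M := by
      ext i j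
      rcases i with i | i <;> rcases j with j | j <;>
        simp [hMdef, Matrix.submatrix_apply]
    rw [← Matrix.det_submatrix_equiv_self (Equiv.ofBijective _ hbij2) A, h2,
      Matrix.det_fromBlocks₂₂, Matrix.det_fin_two]
    congr 1
  set E : F := ((Equiv.Perm.sign (e0.trans eL.symm) : ℤ) : F) with hE
  have hEsq : E * E = 1 := by
    rcases Int.units_eq_one_or (Equiv.Perm.sign (e0.trans eL.symm)) with h' | h' <;>
      simp [hE, h']
  rw [hA, hTL, hBR, hTR, hBL, hsign]
  simp only [Equiv.self_trans_symm, Equiv.Perm.sign_refl]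
  push_cast
  rw [← hE]
  linear_combination (M.det ^ 2 * s 0 1 * s 1 0) * hEsq

lemma dj {n : ℕ} (A : Matrix (Fin (n+2)) (Fin (n+2)) ℝ) :
    A.det * (A.submatrix inn inn).det =
      (A.submatrix Fin.castSucc Fin.castSucc).det * (A.submatrix Fin.succ Fin.succ).det -
      (A.submatrix Fin.castSucc Fin.succ).det * (A.submatrix Fin.succ Fin.castSucc).det := by
  classical
  set Ap : Matrix (Fin (n+2)) (Fin (n+2)) ℝ[X] :=
    A.map Polynomial.C + (Polynomial.X : ℝ[X]) • (1 : Matrix _ _ ℝ[X]) with hAp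
  -- the interior of Ap is the charmatrix of -(interior A)
  have hint : Ap.submatrix inn inn = charmatrix (-(A.submatrix inn inn)) := by
    ext i j
    by_cases h : i = j
    · subst h
      simp [hAp, Matrix.one_apply, charmatrix_apply_eq, Matrix.submatrix_apply,
        Matrix.add_apply, Matrix.smul_apply, smul_eq_mul, sub_eq_add_neg, map_neg, add_comm]
    · have h' : inn i ≠ inn j := fun hh => h (inn_inj hh)
      simp [hAp, Matrix.one_apply, h, h', charmatrix_apply_ne _ _ _ h,
        Matrix.submatrix_apply, Matrix.add_apply, Matrix.smul_apply]
  have hintdet : (Ap.submatrix inn inn).det ≠ 0 := by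
    rw [hint]
    exact (Matrix.charpoly_monic _).ne_zero
  have det_map' : ∀ {R S : Type} [CommRing R] [CommRing S] (f : R →+* S) {a : ℕ}
      (M : Matrix (Fin a) (Fin a) R), (M.map f).det = f M.det := by
    intro R S _ _ f a M
    rw [RingHom.map_det, RingHom.mapMatrix_apply]
  set K := FractionRing ℝ[X] with hK
  set φ : ℝ[X] →+* K := algebraMap ℝ[X] K with hφ
  have hφinj : Function.Injective φ := IsFractionRing.injective _ _
  have hdet : ∀ (a : ℕ) (f g : Fin a → Fin (n+2)),
      ((Ap.map φ).submatrix f g).det = φ ((Ap.submatrix f g).det) := by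
    intro a f g
    rw [Matrix.submatrix_map, det_map']
  have hdet' : (Ap.map φ).det = φ Ap.det := det_map' φ Ap
  have hB : ((Ap.map φ).submatrix inn inn).det ≠ 0 := by
    rw [hdet]
    intro h
    exact hintdet (hφinj (by simpa using h))
  have key := dj_aux (Ap.map φ) hB
  have keyP : Ap.det * (Ap.submatrix inn inn).det =
      (Ap.submatrix Fin.castSucc Fin.castSucc).det * (Ap.submatrix Fin.succ Fin.succ).det -
      (Ap.submatrix Fin.castSucc Fin.succ).det * (Ap.submatrix Fin.succ Fin.castSucc).det := by
    apply hφinj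
    rw [_root_.map_sub, _root_.map_mul, _root_.map_mul, _root_.map_mul,
      ← hdet, ← hdet, ← hdet, ← hdet, ← hdet, ← hdet']
    exact key
  -- evaluate at 0
  set ψ : ℝ[X] →+* ℝ := Polynomial.evalRingHom (0 : ℝ) with hψ
  have hApψ : Ap.map ψ = A := by
    ext i j
    by_cases h : i = j <;>
      simp [hAp, hψ, Matrix.one_apply, h, Matrix.add_apply, Matrix.smul_apply, smul_eq_mul]
  have keyR := congrArg ψ keyP
  rw [_root_.map_sub, _root_.map_mul, _root_.map_mul, _root_.map_mul] at keyR
  have hev : ∀ (a : ℕ) (f g : Fin a → Fin (n+2)),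
      ψ ((Ap.submatrix f g).det) = (A.submatrix f g).det := by
    intro a f g
    rw [← det_map', ← Matrix.submatrix_map, hApψ]
  have hev' : ψ Ap.det = A.det := by rw [← det_map', hApψ]
  rw [hev', hev, hev, hev, hev, hev] at keyR
  exact keyR

lemma Hd_natCast (m : ℕ) (u : ℕ → ℝ) (a n : ℕ) :
    Hd m u (a : ℤ) n =
      Matrix.det (Matrix.of fun i j : Fin a => fd^[i.val * m] u (n + j.val)) := by
  rw [Hd, if_neg (by simp)]
  rfl

/-- Lemma 5: for `k ≥ 1`, `n ≥ 0`: `H_k(ΔS_n) H_{k−2}(Δ^{m+1}S_{n+1})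
= H_{k−1}(Δ^{m+1}S_{n+1}) H_{k−1}(ΔS_n) − H_{k−1}(Δ^{m+1}S_n) H_{k−1}(ΔS_{n+1})`
(with the convention `H_{−1} = 0` when `k = 1`). -/
theorem stmt_8 (m : ℕ) (hm : 1 ≤ m) (S : ℕ → ℝ) (k n : ℕ) (hk : 1 ≤ k) :
    Hd m (fd^[1] S) (k : ℤ) n * Hd m (fd^[m + 1] S) ((k : ℤ) - 2) (n + 1) =
      Hd m (fd^[m + 1] S) ((k : ℤ) - 1) (n + 1) * Hd m (fd^[1] S) ((k : ℤ) - 1) n -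
        Hd m (fd^[m + 1] S) ((k : ℤ) - 1) n * Hd m (fd^[1] S) ((k : ℤ) - 1) (n + 1) := by
  obtain ⟨k, rfl⟩ : ∃ k', k = k' + 1 := ⟨k - 1, by omega⟩
  rcases k with _ | K
  · -- k = 1
    have h2 : ((0 + 1 : ℕ) : ℤ) - 2 < 0 := by norm_num
    have h1 : ((0 + 1 : ℕ) : ℤ) - 1 = ((0 : ℕ) : ℤ) := by norm_num
    have hz : ∀ (u : ℕ → ℝ) (n' : ℕ), Hd m u ((0 : ℕ) : ℤ) n' = 1 := fun u n' => by
      rw [Hd_natCast]; exact Matrix.det_isEmpty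
    have h0 : Hd m (fd^[m + 1] S) (((0 + 1 : ℕ) : ℤ) - 2) (n + 1) = 0 := by
      rw [Hd, if_pos h2]
    rw [h1, h0, hz, hz, hz, hz]
    ring
  · -- k = K + 2
    have e1 : ((K + 2 : ℕ) : ℤ) - 1 = ((K + 1 : ℕ) : ℤ) := by push_cast; ring
    have e2 : ((K + 2 : ℕ) : ℤ) - 2 = ((K : ℕ) : ℤ) := by push_cast; ring
    rw [e1, e2, Hd_natCast, Hd_natCast, Hd_natCast, Hd_natCast, Hd_natCast, Hd_natCast]
    set A : Matrix (Fin (K + 2)) (Fin (K + 2)) ℝ :=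
      Matrix.of fun i j : Fin (K + 2) => fd^[i.val * m] (fd^[1] S) (n + j.val) with hA
    have key := dj A
    have hfd : ∀ (a b x : ℕ), fd^[a] (fd^[b] S) x = fd^[a + b] S x := by
      intro a b x
      rw [Function.iterate_add_apply]
    -- identify the five submatrix determinants
    have hInt : (Matrix.of fun i j : Fin K => fd^[i.val * m] (fd^[m + 1] S) ((n + 1) + j.val)) =
        A.submatrix inn inn := by
      ext i j
      simp only [Matrix.of_apply, Matrix.submatrix_apply, hA, inn, Fin.coe_castSucc, Fin.val_succ]
      rw [hfd, hfd, show i.val * m + (m + 1) = (i.val + 1) * m + 1 from by ring,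
        show (n + 1) + j.val = n + (j.val + 1) from by omega]
    have hBR : (Matrix.of fun i j : Fin (K+1) => fd^[i.val * m] (fd^[m + 1] S) ((n + 1) + j.val)) =
        A.submatrix Fin.succ Fin.succ := by
      ext i j
      simp only [Matrix.of_apply, Matrix.submatrix_apply, hA, Fin.val_succ]
      rw [hfd, hfd, show i.val * m + (m + 1) = (i.val + 1) * m + 1 from by ring,
        show (n + 1) + j.val = n + (j.val + 1) from by omega]
    have hTL : (Matrix.of fun i j : Fin (K+1) => fd^[i.val * m] (fd^[1] S) (n + j.val)) =
        A.submatrix Fin.castSucc Fin.castSucc := by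
      ext i j
      simp only [Matrix.of_apply, Matrix.submatrix_apply, hA, Fin.coe_castSucc]
    have hBL : (Matrix.of fun i j : Fin (K+1) => fd^[i.val * m] (fd^[m + 1] S) (n + j.val)) =
        A.submatrix Fin.succ Fin.castSucc := by
      ext i j
      simp only [Matrix.of_apply, Matrix.submatrix_apply, hA, Fin.coe_castSucc, Fin.val_succ]
      rw [hfd, hfd, show i.val * m + (m + 1) = (i.val + 1) * m + 1 from by ring]
    have hTR : (Matrix.of fun i j : Fin (K+1) => fd^[i.val * m] (fd^[1] S) ((n + 1) + j.val)) =
        A.submatrix Fin.castSucc Fin.succ := by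
      ext i j
      simp only [Matrix.of_apply, Matrix.submatrix_apply, hA, Fin.coe_castSucc, Fin.val_succ]
      rw [show (n + 1) + j.val = n + (j.val + 1) from by omega]
    rw [hInt, hBR, hTL, hBL, hTR]
    linear_combination key
end

section
/- For every integer k ≥ 0 and every n ≥ 0: (i) F_{(m+1)k+1}^{(n)}·G_{(m+1)k+1}^{(n+1)} − F_{(m+1)k+1}^{(n+1)}·G_{(m+1)k+1}^{(n)} = −F_{(m+1)k+2}^{(n)}·F_{(m+1)k}^{(n+1)}; and (ii) for every i = 2, …, m+1, F_{(m+1)k+i}^{(n)}·G_{(m+1)k+i}^{(n+1)} − F_{(m+1)k+i}^{(n+1)}·G_{(m+1)k+i}^{(n)} = F_{(m+1)k+i+1}^{(n)}·F_{(m+1)k+i−1}^{(n+1)}. -/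
open Matrix Polynomial

section DJMachinery

variable {R : Type*} [CommRing R]

private lemma updateRow_comm' {N : ℕ} (M : Matrix (Fin N) (Fin N) R) {i j : Fin N}
    (hij : i ≠ j) (u v : Fin N → R) :
    (M.updateRow i u).updateRow j v = (M.updateRow j v).updateRow i u := by
  ext a b
  rcases eq_or_ne a i with rfl | hai
  · rw [Matrix.updateRow_apply, if_neg hij, Matrix.updateRow_self, Matrix.updateRow_self]
  · rcases eq_or_ne a j with rfl | haj
    · rw [Matrix.updateRow_self, Matrix.updateRow_apply, if_neg hij.symm, Matrix.updateRow_self]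
    · simp [Matrix.updateRow_apply, hai, haj]

private lemma det_updateRow_expand {N : ℕ} (M : Matrix (Fin N) (Fin N) R) (r : Fin N)
    (v : Fin N → R) :
    (M.updateRow r v).det = ∑ i, v i * (M.updateRow r (Pi.single i 1)).det := by
  have hv : v = ∑ i, v i • (Pi.single i (1 : R) : Fin N → R) := by
    rw [← Finset.univ_sum_single v]
    refine Finset.sum_congr rfl fun i _ => ?_
    ext j
    simp [Pi.single_apply]
  calc (M.updateRow r v).det
      = (M.updateRow r (∑ i, v i • (Pi.single i (1:R) : Fin N → R))).det := by rw [← hv]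
    _ = ∑ i, (M.updateRow r (v i • (Pi.single i (1:R) : Fin N → R))).det :=
        (Matrix.detRowAlternating : (Fin N → R) [⋀^Fin N]→ₗ[R] R).map_update_sum
          Finset.univ r _ M
    _ = ∑ i, v i * (M.updateRow r (Pi.single i 1)).det := by
        refine Finset.sum_congr rfl fun i _ => ?_
        rw [Matrix.det_updateRow_smul]

private lemma det_E (k : ℕ) (i j : Fin (k + 2)) :
    (((1 : Matrix (Fin (k+2)) (Fin (k+2)) R).updateRow (Fin.last (k+1))
        (Pi.single j 1)).updateRow 0 (Pi.single i 1)).det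
      = (if i = 0 then (if j = Fin.last (k+1) then (1:R) else 0) else 0)
        - (if i = Fin.last (k+1) then (if j = 0 then (1:R) else 0) else 0) := by
  have h0last : (0 : Fin (k+2)) ≠ Fin.last (k+1) := by
    simp [Fin.ext_iff]
  set E := ((1 : Matrix (Fin (k+2)) (Fin (k+2)) R).updateRow (Fin.last (k+1))
        (Pi.single j 1)).updateRow 0 (Pi.single i 1) with hE
  have hrow0 : E 0 = Pi.single i 1 := Matrix.updateRow_self
  have hrowlast : E (Fin.last (k+1)) = Pi.single j 1 := by
    rw [hE, Matrix.updateRow_ne h0last.symm, Matrix.updateRow_self]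
  have hrowmid : ∀ a : Fin (k+2), a ≠ 0 → a ≠ Fin.last (k+1) → E a = (1 : Matrix _ _ R) a := by
    intro a ha0 hal
    rw [hE, Matrix.updateRow_ne ha0, Matrix.updateRow_ne hal]
  have hone : ∀ (c : Fin (k+2)), (1 : Matrix (Fin (k+2)) (Fin (k+2)) R) c = Pi.single c 1 := by
    intro c; ext b; simp [Matrix.one_apply, Pi.single_apply, eq_comm]
  rcases eq_or_ne i j with rfl | hij
  · rw [Matrix.det_zero_of_row_eq h0last (by rw [hrow0, hrowlast])]
    split_ifs <;> simp_all
  rcases eq_or_ne i 0 with rfl | hi0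
  · rcases eq_or_ne j (Fin.last (k+1)) with rfl | hjl
    · have : E = 1 := by
        funext a b
        rcases eq_or_ne a 0 with rfl | ha0
        · rw [hrow0, ← hone]
        · rcases eq_or_ne a (Fin.last (k+1)) with rfl | hal
          · rw [hrowlast, ← hone]
          · rw [hrowmid a ha0 hal]
      rw [this, Matrix.det_one]
      simp [h0last]
    · have hj0 : j ≠ 0 := Ne.symm hij
      rw [Matrix.det_zero_of_row_eq (Ne.symm hjl) (by rw [hrowlast, hrowmid j hj0 hjl, hone])]
      simp [hjl, h0last]
  rcases eq_or_ne i (Fin.last (k+1)) with rfl | hil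
  · rcases eq_or_ne j 0 with rfl | hj0
    · have : E = (1 : Matrix (Fin (k+2)) (Fin (k+2)) R).submatrix
          (Equiv.swap 0 (Fin.last (k+1))) id := by
        funext a b
        rcases eq_or_ne a 0 with rfl | ha0
        · rw [hrow0]
          rw [Matrix.submatrix_apply, Equiv.swap_apply_left, id, ← hone]
        · rcases eq_or_ne a (Fin.last (k+1)) with rfl | hal
          · rw [hrowlast]
            rw [Matrix.submatrix_apply, Equiv.swap_apply_right, id, ← hone]
          · rw [hrowmid a ha0 hal]
            rw [Matrix.submatrix_apply, Equiv.swap_apply_of_ne_of_ne ha0 hal, id]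
      rw [this, Matrix.det_permute, Equiv.Perm.sign_swap h0last, Matrix.det_one]
      simp [h0last.symm]
    · have hjl : j ≠ Fin.last (k+1) := Ne.symm hij
      rw [show E.det = 0 from Matrix.det_zero_of_row_eq (Ne.symm hjl)
        (by rw [hrowlast, hrowmid j hj0 hjl, hone])]
      simp [hj0, h0last.symm]
  · rw [Matrix.det_zero_of_row_eq (Ne.symm hi0) (by rw [hrow0, hrowmid i hi0 hil, hone])]
    simp [hi0, hil]

private lemma det_update01 (k : ℕ) (v w : Fin (k + 2) → R) :
    (((1 : Matrix (Fin (k+2)) (Fin (k+2)) R).updateRow 0 v).updateRow (Fin.last (k+1)) w).det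
      = v 0 * w (Fin.last (k+1)) - v (Fin.last (k+1)) * w 0 := by
  have h0last : (0 : Fin (k+2)) ≠ Fin.last (k+1) := by simp [Fin.ext_iff]
  rw [det_updateRow_expand]
  have : ∀ jj : Fin (k+2),
      (((1 : Matrix (Fin (k+2)) (Fin (k+2)) R).updateRow 0 v).updateRow (Fin.last (k+1))
        (Pi.single jj 1)).det
      = (if jj = Fin.last (k+1) then v 0 else 0) - (if jj = 0 then v (Fin.last (k+1)) else 0) := by
    intro jj
    rw [updateRow_comm' _ h0last, det_updateRow_expand]
    have : ∀ ii : Fin (k+2), v ii *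
        ((((1 : Matrix (Fin (k+2)) (Fin (k+2)) R).updateRow (Fin.last (k+1))
          (Pi.single jj 1)).updateRow 0 (Pi.single ii 1)).det)
        = (if ii = 0 then (if jj = Fin.last (k+1) then v 0 else 0) else 0)
          - (if ii = Fin.last (k+1) then (if jj = 0 then v (Fin.last (k+1)) else 0) else 0) := by
      intro ii
      rw [det_E]
      split_ifs <;> simp_all
    rw [Finset.sum_congr rfl fun ii _ => this ii, Finset.sum_sub_distrib]
    simp
  rw [Finset.sum_congr rfl fun jj _ => by rw [this jj]]
  have e1 : ∀ (c : Fin (k+2)) (x : R), (∑ jj, w jj * (if jj = c then x else 0)) = w c * x := by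
    intro c x
    rw [Finset.sum_eq_single c (fun b _ hb => by simp [hb]) (by simp)]
    simp
  simp only [mul_sub]
  rw [Finset.sum_sub_distrib, e1, e1]
  ring


variable {K : Type*} [Field K]

private lemma updateColumn_comm' {N : ℕ} (M : Matrix (Fin N) (Fin N) K) {i j : Fin N}
    (hij : i ≠ j) (u v : Fin N → K) :
    (M.updateCol i u).updateCol j v = (M.updateCol j v).updateCol i u := by
  ext a b
  rcases eq_or_ne b i with rfl | hbi
  · rw [Matrix.updateCol_apply, if_neg hij, Matrix.updateCol_self,
      Matrix.updateCol_apply, if_pos rfl]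
  · rcases eq_or_ne b j with rfl | hbj
    · rw [Matrix.updateCol_self, Matrix.updateCol_apply, if_neg hij.symm,
        Matrix.updateCol_self]
    · simp [Matrix.updateCol_apply, hbi, hbj]

private lemma dj_field (k : ℕ) (A : Matrix (Fin (k+2)) (Fin (k+2)) K) (hA : A.det ≠ 0) :
    A.det * (A.submatrix (fun i : Fin k => i.succ.succ) (fun j : Fin k => j.succ.castSucc)).det
      = (A.submatrix Fin.succ Fin.succ).det
          * (A.submatrix (Fin.succAbove 1) Fin.castSucc).det
        - (A.submatrix Fin.succ Fin.castSucc).det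
          * (A.submatrix (Fin.succAbove 1) Fin.succ).det := by
  have h0last : (0 : Fin (k+2)) ≠ Fin.last (k+1) := by simp [Fin.ext_iff]
  set d := A.det with hd
  set e0 : Fin (k+2) → K := fun i => (1 : Matrix (Fin (k+2)) (Fin (k+2)) K) i 0 with he0
  set e1 : Fin (k+2) → K := fun i => (1 : Matrix (Fin (k+2)) (Fin (k+2)) K) i 1 with he1
  set B : Matrix (Fin (k+2)) (Fin (k+2)) K :=
    ((1 : Matrix (Fin (k+2)) (Fin (k+2)) K).updateRow 0 (fun i => adjugate A i 0)).updateRow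
      (Fin.last (k+1)) (fun i => adjugate A i 1) with hB
  set Q : Matrix (Fin (k+2)) (Fin (k+2)) K :=
    (A.updateCol 0 (fun i => d * e0 i)).updateCol (Fin.last (k+1))
      (fun i => d * e1 i) with hQ
  set Rm : Matrix (Fin (k+2)) (Fin (k+2)) K :=
    (A.updateCol 0 e0).updateCol (Fin.last (k+1)) e1 with hR
  -- Step 1 : A * Bᵀ = Q
  have h1 : A * Bᵀ = Q := by
    ext i j
    rw [Matrix.mul_apply]
    rcases eq_or_ne j 0 with rfl | hj0
    · have hb : B 0 = (fun i => adjugate A i 0) := by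
        rw [hB, Matrix.updateRow_ne h0last, Matrix.updateRow_self]
      have hBrow : ∀ l, Bᵀ l (0 : Fin (k+2)) = adjugate A l 0 := by
        intro l
        rw [Matrix.transpose_apply]
        exact congrFun hb l
      simp_rw [hBrow]
      rw [← Matrix.mul_apply, Matrix.mul_adjugate]
      rw [hQ, Matrix.updateCol_apply, if_neg h0last, Matrix.updateCol_self]
      simp [he0, ← hd]
    · rcases eq_or_ne j (Fin.last (k+1)) with rfl | hjl
      · have hb : B (Fin.last (k+1)) = (fun i => adjugate A i 1) := by
          rw [hB, Matrix.updateRow_self]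
        have hBrow : ∀ l, Bᵀ l (Fin.last (k+1)) = adjugate A l 1 := by
          intro l
          rw [Matrix.transpose_apply]
          exact congrFun hb l
        simp_rw [hBrow]
        rw [← Matrix.mul_apply, Matrix.mul_adjugate]
        rw [hQ, Matrix.updateCol_self]
        simp [he1, ← hd]
      · have hb : B j = (1 : Matrix (Fin (k+2)) (Fin (k+2)) K) j := by
          rw [hB, Matrix.updateRow_ne hjl, Matrix.updateRow_ne hj0]
        have hBrow : ∀ l, Bᵀ l j = (1 : Matrix (Fin (k+2)) (Fin (k+2)) K) l j := by
          intro l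
          rw [Matrix.transpose_apply, congrFun hb l, Matrix.one_apply, Matrix.one_apply]
          exact if_congr eq_comm rfl rfl
        simp_rw [hBrow]
        rw [← Matrix.mul_apply, Matrix.mul_one]
        rw [hQ, Matrix.updateCol_ne hjl, Matrix.updateCol_ne hj0]
  -- Step 2 : det B
  have h2 : Bᵀ.det = adjugate A 0 0 * adjugate A (Fin.last (k+1)) 1
      - adjugate A (Fin.last (k+1)) 0 * adjugate A 0 1 := by
    rw [Matrix.det_transpose, hB, det_update01]
  -- Step 3 : det Q = d * (d * det Rm)
  have h3 : Q.det = d * (d * Rm.det) := by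
    have hsm0 : (fun i => d * e0 i) = d • e0 := rfl
    have hsm1 : (fun i => d * e1 i) = d • e1 := rfl
    rw [hQ, hsm0, hsm1, Matrix.det_updateCol_smul,
      updateColumn_comm' _ h0last, Matrix.det_updateCol_smul, updateColumn_comm' _ h0last.symm,
      ← hR]
  -- Step 4 : det Rm = (-1)^k * inner
  have h4 : Rm.det = (-1)^k *
      (A.submatrix (fun i : Fin k => i.succ.succ) (fun j : Fin k => j.succ.castSucc)).det := by
    have hRcol0 : ∀ i, Rm i 0 = (1 : Matrix (Fin (k+2)) (Fin (k+2)) K) i 0 := by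
      intro i
      rw [hR, Matrix.updateCol_ne h0last, Matrix.updateCol_self]
    rw [Matrix.det_succ_column_zero]
    rw [Finset.sum_eq_single 0 (fun b _ hb => by
      rw [hRcol0 b, Matrix.one_apply, if_neg hb]; ring) (by simp)]
    rw [hRcol0 0, Matrix.one_apply, if_pos rfl, Fin.succAbove_zero]
    set R1 := Rm.submatrix Fin.succ Fin.succ with hR1
    have hR1col : ∀ i, R1 i (Fin.last k) =
        (1 : Matrix (Fin (k+2)) (Fin (k+2)) K) i.succ 1 := by
      intro i
      rw [hR1, Matrix.submatrix_apply, Fin.succ_last, hR, Matrix.updateCol_self]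
    have hs : ∀ b : Fin (k+1), (b.succ = (1 : Fin (k+2))) ↔ b = 0 := fun b => by
      rw [Fin.ext_iff, Fin.ext_iff, Fin.val_succ, Fin.val_one, Fin.val_zero]
      omega
    rw [Matrix.det_succ_column R1 (Fin.last k)]
    rw [Finset.sum_eq_single 0 (fun b _ hb => by
      rw [hR1col b, Matrix.one_apply, if_neg (by rw [hs]; exact hb)]; ring) (by simp)]
    rw [hR1col 0, Matrix.one_apply, if_pos ((hs 0).mpr rfl), Fin.succAbove_zero,
      Fin.succAbove_last]
    have : R1.submatrix Fin.succ Fin.castSucc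
        = A.submatrix (fun i : Fin k => i.succ.succ) (fun j : Fin k => j.succ.castSucc) := by
      ext a b
      rw [hR1, Matrix.submatrix_apply, Matrix.submatrix_apply, Matrix.submatrix_apply, hR]
      rw [Matrix.updateCol_ne, Matrix.updateCol_ne, Fin.succ_castSucc]
      · exact (Fin.succ_ne_zero _)
      · rw [Fin.succ_castSucc]
        exact Fin.ne_of_lt (Fin.castSucc_lt_last _)
    rw [this]
    simp only [Fin.val_zero, Fin.val_last, pow_zero, zero_add]
    ring
  -- Step 5 : combine
  have h5 : d * Bᵀ.det = Q.det := by rw [← h1, Matrix.det_mul, hd]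
  rw [h2, h3, h4] at h5
  -- adjugate entries as minors
  have ha00 : adjugate A 0 0 = (A.submatrix Fin.succ Fin.succ).det := by
    rw [Matrix.adjugate_fin_succ_eq_det_submatrix]
    simp [Fin.succAbove_zero]
  have haL1 : adjugate A (Fin.last (k+1)) 1
      = (-1)^k * (A.submatrix (Fin.succAbove 1) Fin.castSucc).det := by
    rw [Matrix.adjugate_fin_succ_eq_det_submatrix]
    rw [Fin.succAbove_last]
    congr 1
    have : ((1 : Fin (k+2)) : ℕ) + ((Fin.last (k+1)) : ℕ) = k + 2 := by
      rw [Fin.val_one, Fin.val_last]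
      omega
    rw [this, pow_add]
    ring
  have haL0 : adjugate A (Fin.last (k+1)) 0
      = (-1)^(k+1) * (A.submatrix Fin.succ Fin.castSucc).det := by
    rw [Matrix.adjugate_fin_succ_eq_det_submatrix]
    rw [Fin.succAbove_last, Fin.succAbove_zero]
    congr 1
    have : ((0 : Fin (k+2)) : ℕ) + ((Fin.last (k+1)) : ℕ) = k + 1 := by
      rw [Fin.val_zero, Fin.val_last, Nat.zero_add]
    rw [this]
  have ha01 : adjugate A 0 1 = -(A.submatrix (Fin.succAbove 1) Fin.succ).det := by
    rw [Matrix.adjugate_fin_succ_eq_det_submatrix]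
    rw [Fin.succAbove_zero]
    have : (((1 : Fin (k+2)) : ℕ) + ((0 : Fin (k+2)) : ℕ)) = 1 := by
      rw [Fin.val_one, Fin.val_zero]
    rw [this]
    ring
  rw [ha00, haL1, haL0, ha01] at h5
  have hcan : ((-1 : K)^k) ≠ 0 := pow_ne_zero _ (by norm_num)
  have h6 : d * ((-1:K)^k * ((A.submatrix Fin.succ Fin.succ).det
        * (A.submatrix (Fin.succAbove 1) Fin.castSucc).det
      - (A.submatrix Fin.succ Fin.castSucc).det
        * (A.submatrix (Fin.succAbove 1) Fin.succ).det))
      = d * ((-1:K)^k * (d * (A.submatrix (fun i : Fin k => i.succ.succ)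
          (fun j : Fin k => j.succ.castSucc)).det)) := by
    linear_combination h5
  have h7 := mul_left_cancel₀ hA h6
  have h8 := mul_left_cancel₀ hcan h7
  exact h8.symm


private lemma submatrix_map' {S T : Type*} (f : S → T) {N P : ℕ}
    (M : Matrix (Fin N) (Fin N) S) (r c : Fin P → Fin N) :
    (M.map f).submatrix r c = (M.submatrix r c).map f := rfl

private lemma dj_real (k : ℕ) (A : Matrix (Fin (k+2)) (Fin (k+2)) ℝ) :
    A.det * (A.submatrix (fun i : Fin k => i.succ.succ) (fun j : Fin k => j.succ.castSucc)).det
      = (A.submatrix Fin.succ Fin.succ).det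
          * (A.submatrix (Fin.succAbove 1) Fin.castSucc).det
        - (A.submatrix Fin.succ Fin.castSucc).det
          * (A.submatrix (Fin.succAbove 1) Fin.succ).det := by
  classical
  set Ap : Matrix (Fin (k+2)) (Fin (k+2)) (Polynomial ℝ) :=
    Matrix.of (fun i j => Polynomial.C (A i j) + if i = j then Polynomial.X else 0) with hApdef
  have hchar : Ap = Matrix.charmatrix (-A) := by
    ext i j
    rcases eq_or_ne i j with rfl | hij
    · rw [Matrix.charmatrix_apply_eq]
      simp [hApdef]
      ring
    · rw [Matrix.charmatrix_apply_ne _ _ _ hij]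
      simp [hApdef, hij]
  have hAp : Ap.det ≠ 0 := by
    rw [hchar]
    exact (Matrix.charpoly_monic (-A)).ne_zero
  set K := FractionRing (Polynomial ℝ) with hK
  set φ : Polynomial ℝ →+* K := algebraMap (Polynomial ℝ) K with hφdef
  have hφ : Function.Injective φ := IsFractionRing.injective _ _
  set AK : Matrix (Fin (k+2)) (Fin (k+2)) K := Ap.map φ with hAK
  have hAKdet : AK.det ≠ 0 := by
    rw [hAK, ← RingHom.mapMatrix_apply, ← RingHom.map_det]
    intro h
    exact hAp (hφ (by rw [h, map_zero]))
  have hdj := dj_field k AK hAKdet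
  rw [hAK] at hdj
  rw [submatrix_map' φ, submatrix_map' φ, submatrix_map' φ, submatrix_map' φ,
    submatrix_map' φ] at hdj
  simp only [← RingHom.mapMatrix_apply, ← RingHom.map_det] at hdj
  rw [← _root_.map_mul φ, ← _root_.map_mul φ, ← _root_.map_mul φ, ← _root_.map_sub φ] at hdj
  have hpoly := hφ hdj
  -- evaluate at 0
  have hmap : Ap.map (Polynomial.evalRingHom (0:ℝ)) = A := by
    ext i j
    rcases eq_or_ne i j with rfl | hij
    · simp [hApdef]
    · simp [hApdef, hij]
  have hev := congrArg (Polynomial.evalRingHom (0:ℝ)) hpoly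
  simp only [_root_.map_mul, _root_.map_sub, RingHom.map_det, RingHom.mapMatrix_apply,
    ← submatrix_map', hmap] at hev
  exact hev


private lemma det_ones {N : ℕ} (M : Matrix (Fin (N+1)) (Fin (N+1)) ℝ) (h : ∀ j, M 0 j = 1) :
    M.det = (Matrix.of fun i j : Fin N => M i.succ j.succ - M i.succ j.castSucc).det := by
  classical
  set T : Matrix (Fin (N+1)) (Fin (N+1)) ℝ := Matrix.of fun i j => if i ≤ j then (1:ℝ) else 0
    with hT
  set M₂ : Matrix (Fin (N+1)) (Fin (N+1)) ℝ := Matrix.of fun i j =>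
    Fin.cases (M i 0) (fun j' => M i j'.succ - M i j'.castSucc) j with hM₂
  have h1 : M₂ * T = M := by
    ext i j
    rw [Matrix.mul_apply]
    induction j using Fin.induction with
    | zero =>
      rw [Finset.sum_eq_single (0 : Fin (N+1)) (fun b _ hb => by
        have : ¬ (b ≤ 0) := by
          intro h; apply hb; rw [Fin.le_def] at h
          exact Fin.ext (by simp only [Fin.val_zero] at h ⊢; omega)
        rw [hT]
        simp only [Matrix.of_apply, if_neg this]
        ring) (by simp)]
      rw [hT, hM₂]
      simp
    | succ j ih =>
      have hTs : ∀ l, T l j.succ = T l j.castSucc + (if l = j.succ then 1 else 0) := by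
        intro l
        rw [hT]
        simp only [Matrix.of_apply, Fin.le_def, Fin.ext_iff, Fin.val_succ, Fin.coe_castSucc]
        split_ifs <;> first | (exfalso; omega) | norm_num
      simp only [hTs, mul_add]
      rw [Finset.sum_add_distrib, ih]
      rw [Finset.sum_eq_single j.succ (fun b _ hb => by rw [if_neg hb]; ring) (by simp)]
      rw [if_pos rfl, mul_one, hM₂]
      simp only [Matrix.of_apply, Fin.cases_succ]
      ring
  have h2 : T.det = 1 := by
    have : T.BlockTriangular id := by
      intro i j hij
      rw [hT]
      simp only [Matrix.of_apply]
      exact if_neg (not_le.2 hij)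
    rw [Matrix.det_of_upperTriangular this]
    rw [hT]
    simp
  have hsub : M₂.submatrix Fin.succ Fin.succ
      = (Matrix.of fun i j : Fin N => M i.succ j.succ - M i.succ j.castSucc) := by
    ext a b
    rw [Matrix.submatrix_apply, hM₂]
    simp [Fin.cases_succ]
  have hM00 : M₂ 0 0 = 1 := by
    rw [hM₂]
    simp only [Matrix.of_apply, Fin.cases_zero]
    exact h 0
  have h3 : M₂.det = (Matrix.of fun i j : Fin N => M i.succ j.succ - M i.succ j.castSucc).det := by
    rw [Matrix.det_succ_row_zero]
    rw [Finset.sum_eq_single (0 : Fin (N+1)) (fun b _ hb => by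
      obtain ⟨b', rfl⟩ : ∃ b', b = Fin.succ b' := ⟨b.pred hb, by simp⟩
      rw [hM₂]
      simp only [Matrix.of_apply, Fin.cases_succ, h, sub_self]
      ring) (by simp)]
    rw [Fin.succAbove_zero, hsub, hM00]
    simp
  calc M.det = (M₂ * T).det := by rw [h1]
    _ = M₂.det * T.det := Matrix.det_mul _ _
    _ = M₂.det := by rw [h2, mul_one]
    _ = _ := h3

end DJMachinery

/-- `F_j^{(n)}` for `j ≥ −m`: writing `j = (m+1)(k−1) + i` with `k ≥ 0` and
`i ∈ {1, …, m+1}` (equivalently `j + m = (m+1)k + (i−1)`), set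
`F_j^{(n)} = H_k(Δ^i S_n)`. -/
noncomputable def Fb (m : ℕ) (S : ℕ → ℝ) (j : ℤ) (n : ℕ) : ℝ :=
  Hd m (fd^[(j + m).toNat % (m + 1) + 1] S) (((j + m).toNat / (m + 1) : ℕ)) n

/-- `G_j^{(n)}` for `j ≥ −m`: writing `j = (m+1)(k−1) + i` with `k ≥ 0` and
`i ∈ {1, …, m+1}`, set `G_j^{(n)} = H_{k−1}(Δ^{m+2} S_n)` if `i = 1`,
`G_j^{(n)} = H_{k+1}(S_n)` if `i = m+1` (i.e. `j = (m+1)k`), and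
`G_j^{(n)} = Φ_{k+1}(Δ^{i−1} S_n)` for `i = 2, …, m`. -/
noncomputable def Gb (m : ℕ) (S : ℕ → ℝ) (j : ℤ) (n : ℕ) : ℝ :=
  let t := (j + m).toNat
  let k := t / (m + 1)
  let i := t % (m + 1) + 1
  if i = 1 then Hd m (fd^[m + 2] S) ((k : ℤ) - 1) n
  else if i = m + 1 then Hd m S ((k : ℤ) + 1) n
  else Phi m (fd^[i - 1] S) (k + 1) n

private lemma fd_iter_add (a b : ℕ) (S : ℕ → ℝ) (x : ℕ) :
    fd^[a] (fd^[b] S) x = fd^[a+b] S x := by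
  rw [Function.iterate_add_apply]

private lemma fd_succ' (p : ℕ) (S : ℕ → ℝ) (x : ℕ) :
    fd^[p] S (x+1) - fd^[p] S x = fd^[p+1] S x := by
  rw [Function.iterate_succ_apply']
  rfl

private lemma fd_congr {p q x y : ℕ} (S : ℕ → ℝ) (hp : p = q) (hx : x = y) :
    fd^[p] S x = fd^[q] S y := by rw [hp, hx]

private lemma Hd_nat (m : ℕ) (u : ℕ → ℝ) (k n : ℕ) :
    Hd m u (k : ℤ) n = (Matrix.of fun i j : Fin k => fd^[i.val * m] u (n + j.val)).det := by
  rw [Hd, if_neg (by omega)]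
  simp only [Int.toNat_natCast]

-- facts about the embedding deleting row 1
private lemma succAbove_one_zero {k : ℕ} : (1 : Fin (k+2)).succAbove 0 = 0 := by
  rw [Fin.succAbove_of_castSucc_lt]
  · rfl
  · rw [Fin.lt_def]
    simp [Fin.val_one]
private lemma succAbove_one_succ {k : ℕ} (a : Fin k) :
    (1 : Fin (k+2)).succAbove a.succ = a.succ.succ := by
  rw [Fin.succAbove_of_le_castSucc]
  rw [Fin.le_def]
  simp [Fin.val_one]

private lemma core1 (m k n : ℕ) (S : ℕ → ℝ) :
    Hd m (fd^[1] S) ((k+1 : ℕ) : ℤ) n * Hd m (fd^[m+2] S) ((k : ℕ) : ℤ) (n+1)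
      - Hd m (fd^[1] S) ((k+1 : ℕ) : ℤ) (n+1) * Hd m (fd^[m+2] S) ((k : ℕ) : ℤ) n
    = -(Hd m (fd^[2] S) ((k+1 : ℕ) : ℤ) n * Hd m (fd^[m+1] S) ((k : ℕ) : ℤ) (n+1)) := by
  set M1 : Matrix (Fin (k+2)) (Fin (k+2)) ℝ := Matrix.of fun a b =>
    if a = 0 then (1:ℝ) else fd^[(a.val - 1)*m + 1] S (n + b.val) with hM1
  have hrow1 : ∀ (a : Fin (k+1)) (b : Fin (k+2)), M1 a.succ b
      = fd^[a.val * m + 1] S (n + b.val) := by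
    intro a b
    rw [hM1]
    simp only [Matrix.of_apply, if_neg (Fin.succ_ne_zero a)]
    exact fd_congr S (by simp) rfl
  -- full det
  have e_full : M1.det = Hd m (fd^[2] S) ((k+1 : ℕ) : ℤ) n := by
    rw [det_ones M1 (fun j => by rw [hM1]; simp), Hd_nat]
    congr 1
    ext a b
    simp only [Matrix.of_apply]
    rw [hrow1, hrow1, fd_iter_add]
    rw [show (n + (b.succ.val : ℕ)) = (n + b.castSucc.val) + 1 by
      simp only [Fin.val_succ, Fin.coe_castSucc]; omega]
    rw [fd_succ']
    exact fd_congr S (by ring) (by simp only [Fin.coe_castSucc])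
  -- delete row 0 col 0
  have e00 : (M1.submatrix Fin.succ Fin.succ).det = Hd m (fd^[1] S) ((k+1 : ℕ) : ℤ) (n+1) := by
    rw [Hd_nat]
    congr 1
    ext a b
    simp only [Matrix.submatrix_apply, Matrix.of_apply]
    rw [hrow1, fd_iter_add]
    exact fd_congr S rfl (by simp only [Fin.val_succ]; omega)
  -- delete row 0 col last
  have e0L : (M1.submatrix Fin.succ Fin.castSucc).det = Hd m (fd^[1] S) ((k+1 : ℕ) : ℤ) n := by
    rw [Hd_nat]
    congr 1
  -- delete row 1 col last
  have e1L : (M1.submatrix (Fin.succAbove 1) Fin.castSucc).det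
      = Hd m (fd^[m+2] S) ((k : ℕ) : ℤ) n := by
    have hr0 : ∀ j : Fin (k+1), (M1.submatrix (Fin.succAbove 1) Fin.castSucc) 0 j = 1 := by
      intro j
      rw [Matrix.submatrix_apply, succAbove_one_zero, hM1]
      simp
    rw [det_ones _ hr0, Hd_nat]
    congr 1
    ext a b
    simp only [Matrix.of_apply, Matrix.submatrix_apply, succAbove_one_succ]
    rw [show ((a.succ.succ : Fin (k+2))) = ((a.succ : Fin (k+1)).succ) from rfl]
    rw [hrow1, hrow1, fd_iter_add]
    rw [show (n + ((b.succ.castSucc : Fin (k+2)).val : ℕ))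
        = (n + (b.castSucc.castSucc : Fin (k+2)).val) + 1 by
      simp only [Fin.val_succ, Fin.coe_castSucc]; omega]
    rw [fd_succ']
    exact fd_congr S (by simp only [Fin.val_succ]; ring)
      (by simp only [Fin.coe_castSucc])
  -- delete row 1 col 0
  have e10 : (M1.submatrix (Fin.succAbove 1) Fin.succ).det
      = Hd m (fd^[m+2] S) ((k : ℕ) : ℤ) (n+1) := by
    have hr0 : ∀ j : Fin (k+1), (M1.submatrix (Fin.succAbove 1) Fin.succ) 0 j = 1 := by
      intro j
      rw [Matrix.submatrix_apply, succAbove_one_zero, hM1]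
      simp
    rw [det_ones _ hr0, Hd_nat]
    congr 1
    ext a b
    simp only [Matrix.of_apply, Matrix.submatrix_apply, succAbove_one_succ]
    rw [show ((a.succ.succ : Fin (k+2))) = ((a.succ : Fin (k+1)).succ) from rfl]
    rw [hrow1, hrow1, fd_iter_add]
    rw [show (n + ((b.succ.succ : Fin (k+2)).val : ℕ))
        = (n + (b.castSucc.succ : Fin (k+2)).val) + 1 by
      simp only [Fin.val_succ, Fin.coe_castSucc]; omega]
    rw [fd_succ']
    exact fd_congr S (by simp only [Fin.val_succ]; ring)
      (by simp only [Fin.val_succ, Fin.coe_castSucc]; omega)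
  -- inner
  have einner : (M1.submatrix (fun i : Fin k => i.succ.succ)
      (fun j : Fin k => j.succ.castSucc)).det = Hd m (fd^[m+1] S) ((k : ℕ) : ℤ) (n+1) := by
    rw [Hd_nat]
    congr 1
    ext a b
    simp only [Matrix.submatrix_apply, Matrix.of_apply]
    rw [show ((a.succ.succ : Fin (k+2))) = ((a.succ : Fin (k+1)).succ) from rfl]
    rw [hrow1, fd_iter_add]
    exact fd_congr S (by simp only [Fin.val_succ]; ring)
      (by simp only [Fin.val_succ, Fin.coe_castSucc]; omega)
  have hdj := dj_real k M1
  rw [e_full, e00, e0L, e1L, e10, einner] at hdj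
  linarith [hdj]

private lemma core3 (m k n : ℕ) (S : ℕ → ℝ) :
    Hd m (fd^[m+1] S) ((k+1 : ℕ) : ℤ) n * Hd m S ((k+2 : ℕ) : ℤ) (n+1)
      - Hd m (fd^[m+1] S) ((k+1 : ℕ) : ℤ) (n+1) * Hd m S ((k+2 : ℕ) : ℤ) n
    = Hd m (fd^[1] S) ((k+2 : ℕ) : ℤ) n * Hd m (fd^[m] S) ((k+1 : ℕ) : ℤ) (n+1) := by
  set M3 : Matrix (Fin (k+3)) (Fin (k+3)) ℝ := Matrix.of fun a b =>
    if a = 0 then (1:ℝ) else fd^[(a.val - 1)*m] S (n + b.val) with hM3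
  have hrow1 : ∀ (a : Fin (k+2)) (b : Fin (k+3)), M3 a.succ b
      = fd^[a.val * m] S (n + b.val) := by
    intro a b
    rw [hM3]
    simp only [Matrix.of_apply, if_neg (Fin.succ_ne_zero a)]
    exact fd_congr S (by simp) rfl
  -- full det
  have e_full : M3.det = Hd m (fd^[1] S) ((k+2 : ℕ) : ℤ) n := by
    rw [det_ones M3 (fun j => by rw [hM3]; simp), Hd_nat]
    refine congrArg Matrix.det ?_
    ext a b
    simp only [Matrix.of_apply]
    rw [hrow1, hrow1, fd_iter_add]
    rw [show (n + (b.succ.val : ℕ)) = (n + b.castSucc.val) + 1 by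
      simp only [Fin.val_succ, Fin.coe_castSucc]; omega]
    rw [fd_succ']
    exact fd_congr S (by ring) (by simp only [Fin.coe_castSucc])
  -- delete row 0 col 0
  have e00 : (M3.submatrix Fin.succ Fin.succ).det = Hd m S ((k+2 : ℕ) : ℤ) (n+1) := by
    rw [Hd_nat]
    refine congrArg Matrix.det ?_
    ext a b
    simp only [Matrix.submatrix_apply, Matrix.of_apply]
    rw [hrow1]
    exact fd_congr S rfl (by simp only [Fin.val_succ]; omega)
  -- delete row 0 col last
  have e0L : (M3.submatrix Fin.succ Fin.castSucc).det = Hd m S ((k+2 : ℕ) : ℤ) n := by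
    rw [Hd_nat]
    refine congrArg Matrix.det ?_
    ext a b
    simp only [Matrix.submatrix_apply, Matrix.of_apply]
    rw [hrow1]
    exact fd_congr S rfl (by simp only [Fin.coe_castSucc])
  -- delete row 1 col last
  have e1L : (M3.submatrix (Fin.succAbove 1) Fin.castSucc).det
      = Hd m (fd^[m+1] S) ((k+1 : ℕ) : ℤ) n := by
    have hr0 : ∀ j : Fin (k+2), (M3.submatrix (Fin.succAbove 1) Fin.castSucc) 0 j = 1 := by
      intro j
      rw [Matrix.submatrix_apply, succAbove_one_zero, hM3]
      simp
    rw [det_ones _ hr0, Hd_nat]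
    refine congrArg Matrix.det ?_
    ext a b
    simp only [Matrix.of_apply, Matrix.submatrix_apply, succAbove_one_succ]
    rw [show ((a.succ.succ : Fin (k+3))) = ((a.succ : Fin (k+2)).succ) from rfl]
    rw [hrow1, hrow1, fd_iter_add]
    rw [show (n + ((b.succ.castSucc : Fin (k+3)).val : ℕ))
        = (n + (b.castSucc.castSucc : Fin (k+3)).val) + 1 by
      simp only [Fin.val_succ, Fin.coe_castSucc]; omega]
    rw [fd_succ']
    exact fd_congr S (by simp only [Fin.val_succ]; ring)
      (by simp only [Fin.coe_castSucc])
  -- delete row 1 col 0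
  have e10 : (M3.submatrix (Fin.succAbove 1) Fin.succ).det
      = Hd m (fd^[m+1] S) ((k+1 : ℕ) : ℤ) (n+1) := by
    have hr0 : ∀ j : Fin (k+2), (M3.submatrix (Fin.succAbove 1) Fin.succ) 0 j = 1 := by
      intro j
      rw [Matrix.submatrix_apply, succAbove_one_zero, hM3]
      simp
    rw [det_ones _ hr0, Hd_nat]
    refine congrArg Matrix.det ?_
    ext a b
    simp only [Matrix.of_apply, Matrix.submatrix_apply, succAbove_one_succ]
    rw [show ((a.succ.succ : Fin (k+3))) = ((a.succ : Fin (k+2)).succ) from rfl]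
    rw [hrow1, hrow1, fd_iter_add]
    rw [show (n + ((b.succ.succ : Fin (k+3)).val : ℕ))
        = (n + (b.castSucc.succ : Fin (k+3)).val) + 1 by
      simp only [Fin.val_succ, Fin.coe_castSucc]; omega]
    rw [fd_succ']
    exact fd_congr S (by simp only [Fin.val_succ]; ring)
      (by simp only [Fin.val_succ, Fin.coe_castSucc]; omega)
  -- inner
  have einner : (M3.submatrix (fun i : Fin (k+1) => i.succ.succ)
      (fun j : Fin (k+1) => j.succ.castSucc)).det
      = Hd m (fd^[m] S) ((k+1 : ℕ) : ℤ) (n+1) := by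
    rw [Hd_nat]
    refine congrArg Matrix.det ?_
    ext a b
    simp only [Matrix.submatrix_apply, Matrix.of_apply]
    rw [show ((a.succ.succ : Fin (k+3))) = ((a.succ : Fin (k+2)).succ) from rfl]
    rw [hrow1, fd_iter_add]
    exact fd_congr S (by simp only [Fin.val_succ]; ring)
      (by simp only [Fin.val_succ, Fin.coe_castSucc]; omega)
  have hdj := dj_real (k+1) M3
  rw [e_full, e00, e0L, e1L, e10, einner] at hdj
  linarith [hdj]

private lemma core2 (m q k n : ℕ) (S : ℕ → ℝ) :
    Hd m (fd^[q+2] S) ((k+1 : ℕ) : ℤ) n * Phi m (fd^[q+1] S) (k+2) (n+1)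
      - Hd m (fd^[q+2] S) ((k+1 : ℕ) : ℤ) (n+1) * Phi m (fd^[q+1] S) (k+2) n
    = Hd m (fd^[q+3] S) ((k+1 : ℕ) : ℤ) n * Hd m (fd^[q+1] S) ((k+1 : ℕ) : ℤ) (n+1) := by
  set M2 : Matrix (Fin (k+3)) (Fin (k+3)) ℝ := Matrix.of fun a b =>
    if a = 0 then (1:ℝ)
    else if a = 1 then ((n + b.val : ℕ) : ℝ)
    else fd^[(a.val - 2)*m + (q+1)] S (n + b.val) with hM2
  have h01 : ((0 : Fin (k+2)).succ) = (1 : Fin (k+3)) := by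
    rw [Fin.ext_iff, Fin.val_succ, Fin.val_zero, Fin.val_one]
  have hss1 : ∀ a : Fin (k+1), (a.succ.succ : Fin (k+3)) ≠ 1 := by
    intro a
    rw [Ne, Fin.ext_iff, Fin.val_succ, Fin.val_succ, Fin.val_one]
    omega
  have hrowlin : ∀ b : Fin (k+3), M2 ((0 : Fin (k+2)).succ) b = ((n + b.val : ℕ) : ℝ) := by
    intro b
    rw [hM2]
    simp only [Matrix.of_apply, if_neg (Fin.succ_ne_zero (0 : Fin (k+2))), if_pos h01]
  have hrow2 : ∀ (a : Fin (k+1)) (b : Fin (k+3)), M2 a.succ.succ b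
      = fd^[a.val * m + (q+1)] S (n + b.val) := by
    intro a b
    rw [hM2]
    simp only [Matrix.of_apply, if_neg (Fin.succ_ne_zero (a.succ : Fin (k+2))),
      if_neg (hss1 a)]
    refine fd_congr S ?_ rfl
    have hv : ((a.succ.succ : Fin (k+3)).val) - 2 = a.val := by
      rw [Fin.val_succ, Fin.val_succ]
      omega
    rw [hv]
  -- full det, two reductions
  set B' : Matrix (Fin (k+2)) (Fin (k+2)) ℝ := Matrix.of fun p q' =>
    M2 p.succ q'.succ - M2 p.succ q'.castSucc with hB'def
  have hB'row : ∀ (a : Fin (k+1)) (b : Fin (k+2)), B' a.succ b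
      = fd^[a.val * m + (q+1) + 1] S (n + b.val) := by
    intro a b
    rw [hB'def]
    simp only [Matrix.of_apply]
    rw [show ((a.succ : Fin (k+2)).succ) = ((a.succ.succ : Fin (k+3))) from rfl]
    rw [hrow2, hrow2]
    rw [show (n + (b.succ.val : ℕ)) = (n + b.castSucc.val) + 1 by
      simp only [Fin.val_succ, Fin.coe_castSucc]; omega]
    rw [fd_succ']
    exact fd_congr S rfl (by rw [Fin.coe_castSucc])
  have e_full : M2.det = Hd m (fd^[q+3] S) ((k+1 : ℕ) : ℤ) n := by
    have h1 : M2.det = B'.det := det_ones M2 (fun j => by rw [hM2]; simp)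
    have h0' : ∀ j : Fin (k+2), B' 0 j = 1 := by
      intro j
      rw [hB'def]
      simp only [Matrix.of_apply]
      rw [hrowlin, hrowlin]
      push_cast [Fin.val_succ, Fin.coe_castSucc]
      ring
    rw [h1, det_ones B' h0', Hd_nat]
    refine congrArg Matrix.det ?_
    ext a b
    simp only [Matrix.of_apply]
    rw [hB'row, hB'row, fd_iter_add]
    rw [show (n + (b.succ.val : ℕ)) = (n + b.castSucc.val) + 1 by
      simp only [Fin.val_succ, Fin.coe_castSucc]; omega]
    rw [fd_succ']
    exact fd_congr S (by ring) (by simp only [Fin.coe_castSucc])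
  -- delete row 0 col 0 : Phi at n+1
  have e00 : (M2.submatrix Fin.succ Fin.succ).det = Phi m (fd^[q+1] S) (k+2) (n+1) := by
    rw [Phi]
    refine congrArg Matrix.det ?_
    ext p b
    simp only [Matrix.submatrix_apply, Matrix.of_apply]
    refine Fin.cases ?_ (fun a => ?_) p
    · rw [hrowlin, if_pos (by rw [Fin.val_zero])]
      have : n + (b.succ.val : ℕ) = (n+1) + b.val := by
        rw [Fin.val_succ]; omega
      rw [this]
    · rw [show ((a.succ : Fin (k+2)).succ) = ((a.succ.succ : Fin (k+3))) from rfl, hrow2]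
      rw [if_neg (by rw [Fin.val_succ]; omega), fd_iter_add]
      refine fd_congr S ?_ (by rw [Fin.val_succ]; omega)
      rw [show ((a.succ : Fin (k+2)).val) - 1 = a.val from rfl]
  -- delete row 0 col last : Phi at n
  have e0L : (M2.submatrix Fin.succ Fin.castSucc).det = Phi m (fd^[q+1] S) (k+2) n := by
    rw [Phi]
    refine congrArg Matrix.det ?_
    ext p b
    simp only [Matrix.submatrix_apply, Matrix.of_apply]
    refine Fin.cases ?_ (fun a => ?_) p
    · rw [hrowlin, if_pos (by rw [Fin.val_zero])]
      rw [Fin.coe_castSucc]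
    · rw [show ((a.succ : Fin (k+2)).succ) = ((a.succ.succ : Fin (k+3))) from rfl, hrow2]
      rw [if_neg (by rw [Fin.val_succ]; omega), fd_iter_add]
      refine fd_congr S ?_ (by rw [Fin.coe_castSucc])
      rw [show ((a.succ : Fin (k+2)).val) - 1 = a.val from rfl]
  -- delete row 1 col last
  have e1L : (M2.submatrix (Fin.succAbove 1) Fin.castSucc).det
      = Hd m (fd^[q+2] S) ((k+1 : ℕ) : ℤ) n := by
    have hr0 : ∀ j : Fin (k+2), (M2.submatrix (Fin.succAbove 1) Fin.castSucc) 0 j = 1 := by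
      intro j
      rw [Matrix.submatrix_apply, succAbove_one_zero, hM2]
      simp
    rw [det_ones _ hr0, Hd_nat]
    refine congrArg Matrix.det ?_
    ext a b
    simp only [Matrix.of_apply, Matrix.submatrix_apply, succAbove_one_succ]
    rw [show ((a.succ.succ : Fin (k+3))) = (((a : Fin (k+1)).succ).succ) from rfl]
    rw [hrow2, hrow2, fd_iter_add]
    rw [show (n + ((b.succ.castSucc : Fin (k+3)).val : ℕ))
        = (n + (b.castSucc.castSucc : Fin (k+3)).val) + 1 by
      simp only [Fin.val_succ, Fin.coe_castSucc]; omega]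
    rw [fd_succ']
    exact fd_congr S (by ring) (by simp only [Fin.coe_castSucc])
  -- delete row 1 col 0
  have e10 : (M2.submatrix (Fin.succAbove 1) Fin.succ).det
      = Hd m (fd^[q+2] S) ((k+1 : ℕ) : ℤ) (n+1) := by
    have hr0 : ∀ j : Fin (k+2), (M2.submatrix (Fin.succAbove 1) Fin.succ) 0 j = 1 := by
      intro j
      rw [Matrix.submatrix_apply, succAbove_one_zero, hM2]
      simp
    rw [det_ones _ hr0, Hd_nat]
    refine congrArg Matrix.det ?_
    ext a b
    simp only [Matrix.of_apply, Matrix.submatrix_apply, succAbove_one_succ]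
    rw [show ((a.succ.succ : Fin (k+3))) = (((a : Fin (k+1)).succ).succ) from rfl]
    rw [hrow2, hrow2, fd_iter_add]
    rw [show (n + ((b.succ.succ : Fin (k+3)).val : ℕ))
        = (n + (b.castSucc.succ : Fin (k+3)).val) + 1 by
      simp only [Fin.val_succ, Fin.coe_castSucc]; omega]
    rw [fd_succ']
    exact fd_congr S (by ring)
      (by simp only [Fin.val_succ, Fin.coe_castSucc]; omega)
  -- inner
  have einner : (M2.submatrix (fun i : Fin (k+1) => i.succ.succ)
      (fun j : Fin (k+1) => j.succ.castSucc)).det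
      = Hd m (fd^[q+1] S) ((k+1 : ℕ) : ℤ) (n+1) := by
    rw [Hd_nat]
    refine congrArg Matrix.det ?_
    ext a b
    simp only [Matrix.submatrix_apply, Matrix.of_apply]
    rw [show ((a.succ.succ : Fin (k+3))) = (((a : Fin (k+1)).succ).succ) from rfl]
    rw [hrow2, fd_iter_add]
    exact fd_congr S (by ring)
      (by simp only [Fin.val_succ, Fin.coe_castSucc]; omega)
  have hdj := dj_real (k+1) M2
  rw [e_full, e00, e0L, e1L, e10, einner] at hdj
  linarith [hdj]

private lemma Fb_red (m : ℕ) (S : ℕ → ℝ) (n r kk e : ℕ) (hr : r < m + 1) (he : r + 1 = e)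
    (a : ℤ) (ha : a + m = ((m+1) * kk + r : ℕ)) :
    Fb m S a n = Hd m (fd^[e] S) ((kk : ℕ) : ℤ) n := by
  have h1 : (a + m).toNat = (m+1) * kk + r := by omega
  have h2 : ((m+1) * kk + r) % (m+1) = r := by
    rw [Nat.mul_add_mod, Nat.mod_eq_of_lt hr]
  have h3 : ((m+1) * kk + r) / (m+1) = kk := by
    rw [Nat.mul_add_div (by omega), Nat.div_eq_of_lt hr, Nat.add_zero]
  rw [Fb, h1, h2, h3, he]

private lemma Gb_red1 (m : ℕ) (S : ℕ → ℝ) (n kk : ℕ)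
    (a : ℤ) (ha : a + m = ((m+1) * kk : ℕ)) :
    Gb m S a n = Hd m (fd^[m+2] S) ((kk : ℤ) - 1) n := by
  have h1 : (a + m).toNat = (m+1) * kk := by omega
  have h2 : ((m+1) * kk) % (m+1) = 0 := Nat.mul_mod_right _ _
  have h3 : ((m+1) * kk) / (m+1) = kk := Nat.mul_div_cancel_left _ (by omega)
  rw [Gb]
  simp only [h1, h2, h3]
  rw [if_pos trivial]

private lemma Gb_red2 (m : ℕ) (S : ℕ → ℝ) (n r kk e kk' : ℕ) (hr1 : 1 ≤ r) (hrm : r < m)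
    (he : r = e) (hk : kk + 1 = kk')
    (a : ℤ) (ha : a + m = ((m+1) * kk + r : ℕ)) :
    Gb m S a n = Phi m (fd^[e] S) kk' n := by
  have h1 : (a + m).toNat = (m+1) * kk + r := by omega
  have h2 : ((m+1) * kk + r) % (m+1) = r := by
    rw [Nat.mul_add_mod, Nat.mod_eq_of_lt (by omega)]
  have h3 : ((m+1) * kk + r) / (m+1) = kk := by
    rw [Nat.mul_add_div (by omega), Nat.div_eq_of_lt (by omega), Nat.add_zero]
  rw [Gb]
  simp only [h1, h2, h3]
  rw [if_neg (by omega), if_neg (by omega), show r + 1 - 1 = e by omega, hk]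

private lemma Gb_red3 (m : ℕ) (S : ℕ → ℝ) (n kk : ℕ) (hm : 1 ≤ m)
    (a : ℤ) (ha : a + m = ((m+1) * kk + m : ℕ)) :
    Gb m S a n = Hd m S ((kk : ℤ) + 1) n := by
  have h1 : (a + m).toNat = (m+1) * kk + m := by omega
  have h2 : ((m+1) * kk + m) % (m+1) = m := by
    rw [Nat.mul_add_mod, Nat.mod_eq_of_lt (by omega)]
  have h3 : ((m+1) * kk + m) / (m+1) = kk := by
    rw [Nat.mul_add_div (by omega), Nat.div_eq_of_lt (by omega), Nat.add_zero]
  rw [Gb]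
  simp only [h1, h2, h3]
  rw [if_neg (by omega), if_pos trivial]

/-- Relations (21) and (23): for every `k, n ≥ 0`,
(i) `F_{(m+1)k+1}^{(n)} G_{(m+1)k+1}^{(n+1)} − F_{(m+1)k+1}^{(n+1)} G_{(m+1)k+1}^{(n)}
= −F_{(m+1)k+2}^{(n)} F_{(m+1)k}^{(n+1)}`, and
(ii) for `i = 2, …, m+1`,
`F_{(m+1)k+i}^{(n)} G_{(m+1)k+i}^{(n+1)} − F_{(m+1)k+i}^{(n+1)} G_{(m+1)k+i}^{(n)}
= F_{(m+1)k+i+1}^{(n)} F_{(m+1)k+i−1}^{(n+1)}`. -/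
theorem stmt_10 (m : ℕ) (hm : 1 ≤ m) (S : ℕ → ℝ) (k n : ℕ) :
    (Fb m S (((m : ℤ) + 1) * k + 1) n * Gb m S (((m : ℤ) + 1) * k + 1) (n + 1) -
        Fb m S (((m : ℤ) + 1) * k + 1) (n + 1) * Gb m S (((m : ℤ) + 1) * k + 1) n =
      -(Fb m S (((m : ℤ) + 1) * k + 2) n * Fb m S (((m : ℤ) + 1) * k) (n + 1))) ∧
    (∀ i : ℕ, 2 ≤ i → i ≤ m + 1 →
      Fb m S (((m : ℤ) + 1) * k + i) n * Gb m S (((m : ℤ) + 1) * k + i) (n + 1) -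
          Fb m S (((m : ℤ) + 1) * k + i) (n + 1) * Gb m S (((m : ℤ) + 1) * k + i) n =
        Fb m S (((m : ℤ) + 1) * k + i + 1) n * Fb m S (((m : ℤ) + 1) * k + i - 1) (n + 1)) := by
  constructor
  · rw [Fb_red m S n 0 (k+1) 1 (by omega) rfl (((m : ℤ) + 1) * k + 1) (by push_cast; ring),
      Fb_red m S (n+1) 0 (k+1) 1 (by omega) rfl (((m : ℤ) + 1) * k + 1) (by push_cast; ring),
      Fb_red m S n 1 (k+1) 2 (by omega) rfl (((m : ℤ) + 1) * k + 2) (by push_cast; ring),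
      Fb_red m S (n+1) m k (m+1) (by omega) rfl (((m : ℤ) + 1) * k) (by push_cast; ring),
      Gb_red1 m S (n+1) (k+1) (((m : ℤ) + 1) * k + 1) (by push_cast; ring),
      Gb_red1 m S n (k+1) (((m : ℤ) + 1) * k + 1) (by push_cast; ring)]
    rw [show ((k+1 : ℕ) : ℤ) - 1 = ((k : ℕ) : ℤ) by push_cast; ring]
    exact core1 m k n S
  · intro i h2 him
    rcases Nat.lt_or_ge i (m+1) with him' | him'
    · -- 2 ≤ i ≤ m, use core2 with q = i - 2
      have hc : ((i - 1 : ℕ) : ℤ) = (i : ℤ) - 1 := by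
        rw [Nat.cast_sub (by omega), Nat.cast_one]
      have hc2 : ((i - 2 : ℕ) : ℤ) = (i : ℤ) - 2 := by
        rw [Nat.cast_sub (by omega)]
        norm_num
      rw [Fb_red m S n (i-1) (k+1) ((i-2)+2) (by omega) (by omega)
          (((m : ℤ) + 1) * k + i) (by push_cast [hc]; ring),
        Fb_red m S (n+1) (i-1) (k+1) ((i-2)+2) (by omega) (by omega)
          (((m : ℤ) + 1) * k + i) (by push_cast [hc]; ring),
        Fb_red m S n i (k+1) ((i-2)+3) (by omega) (by omega)
          (((m : ℤ) + 1) * k + i + 1) (by push_cast; ring),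
        Fb_red m S (n+1) (i-2) (k+1) ((i-2)+1) (by omega) (by omega)
          (((m : ℤ) + 1) * k + i - 1) (by push_cast [hc2]; ring),
        Gb_red2 m S (n+1) (i-1) (k+1) ((i-2)+1) (k+2) (by omega) (by omega) (by omega) rfl
          (((m : ℤ) + 1) * k + i) (by push_cast [hc]; ring),
        Gb_red2 m S n (i-1) (k+1) ((i-2)+1) (k+2) (by omega) (by omega) (by omega) rfl
          (((m : ℤ) + 1) * k + i) (by push_cast [hc]; ring)]
      exact core2 m (i-2) k n S
    · have hieq : i = m + 1 := by omega
      subst hieq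
      rw [Fb_red m S n m (k+1) (m+1) (by omega) rfl
          (((m : ℤ) + 1) * k + (m+1 : ℕ)) (by push_cast; ring),
        Fb_red m S (n+1) m (k+1) (m+1) (by omega) rfl
          (((m : ℤ) + 1) * k + (m+1 : ℕ)) (by push_cast; ring),
        Fb_red m S n 0 (k+2) 1 (by omega) rfl
          (((m : ℤ) + 1) * k + (m+1 : ℕ) + 1) (by push_cast; ring),
        Fb_red m S (n+1) (m-1) (k+1) m (by omega) (by omega)
          (((m : ℤ) + 1) * k + (m+1 : ℕ) - 1)
          (by push_cast [Nat.cast_sub hm]; ring),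
        Gb_red3 m S (n+1) (k+1) hm
          (((m : ℤ) + 1) * k + (m+1 : ℕ)) (by push_cast; ring),
        Gb_red3 m S n (k+1) hm
          (((m : ℤ) + 1) * k + (m+1 : ℕ)) (by push_cast; ring)]
      rw [show ((k+1 : ℕ) : ℤ) + 1 = ((k+2 : ℕ) : ℤ) by push_cast; ring]
      exact core3 m k n S
end

section
/- Let k ≥ 1 and let S be a real number. If there exist real constants a_1, …, a_k such that S_n = S + a_1 Δ^m S_n + a_2 Δ^{2m} S_n + ⋯ + a_k Δ^{km} S_n for all n ≥ 0, then there exist real constants b_1, …, b_{km} such that S_n = S + b_1 ΔS_n + b_2 Δ^2 S_n + ⋯ + b_{km} Δ^{km} S_n for all n ≥ 0; that is, the kernel of the multistep Shanks transformation e_{k,m} is contained in the kernel of the Shanks transformation e_{km}. -/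
/-- Corollary 1: if `S_n = L + a_1 Δ^m S_n + ⋯ + a_k Δ^{km} S_n` for all `n`
(for some constants `a_1, …, a_k`), then there exist constants `b_1, …, b_{km}` with
`S_n = L + b_1 ΔS_n + b_2 Δ^2 S_n + ⋯ + b_{km} Δ^{km} S_n` for all `n`: the kernel of
the multistep Shanks transformation `e_{k,m}` is contained in that of `e_{km}`. -/
theorem stmt_16 (m : ℕ) (hm : 1 ≤ m) (S : ℕ → ℝ) (k : ℕ) (hk : 1 ≤ k) (L : ℝ)
    (h : ∃ a : Fin k → ℝ, ∀ n : ℕ,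
      S n = L + ∑ i : Fin k, a i * fd^[(i.val + 1) * m] S n) :
    ∃ b : Fin (k * m) → ℝ, ∀ n : ℕ,
      S n = L + ∑ j : Fin (k * m), b j * fd^[j.val + 1] S n := by
  classical
  obtain ⟨a, ha⟩ := h
  have he : ∀ i : Fin k, (i.val + 1) * m - 1 < k * m := by
    intro i
    have h1 : (i.val + 1) * m ≤ k * m := Nat.mul_le_mul_right m (by omega)
    have h2 : 1 ≤ (i.val + 1) * m := Nat.one_le_iff_ne_zero.2 (by positivity)
    omega
  set e : Fin k → Fin (k * m) := fun i => ⟨(i.val + 1) * m - 1, he i⟩ with hedef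
  have hev : ∀ i : Fin k, (e i).val + 1 = (i.val + 1) * m := by
    intro i
    have h2 : 1 ≤ (i.val + 1) * m := Nat.one_le_iff_ne_zero.2 (by positivity)
    simp only [hedef]
    omega
  have hinj : Function.Injective e := by
    intro i j hij
    have hij' : (i.val + 1) * m - 1 = (j.val + 1) * m - 1 := congrArg Fin.val hij
    have hi := hev i
    have hj := hev j
    have hmul : (i.val + 1) * m = (j.val + 1) * m := by omega
    have := Nat.eq_of_mul_eq_mul_right (show 0 < m by omega) hmul
    exact Fin.ext (by omega)
  have hdiv : ∀ j : Fin (k * m), ∀ c : ℕ, j.val + 1 = m * c → 1 ≤ c ∧ c ≤ k := by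
    intro j c hc
    have hj := j.isLt
    constructor
    · rcases Nat.eq_zero_or_pos c with h0 | h0
      · subst h0; simp at hc
      · exact h0
    · by_contra hlt
      push_neg at hlt
      have : m * (k + 1) ≤ m * c := Nat.mul_le_mul_left m (by omega)
      nlinarith
  have hidx : ∀ j : Fin (k * m), m ∣ (j.val + 1) → (j.val + 1) / m - 1 < k := by
    intro j hd
    obtain ⟨c, hc⟩ := hd
    obtain ⟨hc1, hck⟩ := hdiv j c hc
    have hq : (j.val + 1) / m = c := by rw [hc, Nat.mul_div_cancel_left _ (by omega)]
    omega
  set b : Fin (k * m) → ℝ := fun j =>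
    if hd : m ∣ (j.val + 1) then a ⟨(j.val + 1) / m - 1, hidx j hd⟩ else 0 with hbdef
  have hbe : ∀ i : Fin k, b (e i) = a i := by
    intro i
    have hd : m ∣ ((e i).val + 1) := by
      rw [hev i]; exact ⟨i.val + 1, by ring⟩
    simp only [hbdef]
    rw [dif_pos hd]
    congr 1
    apply Fin.ext
    show ((e i).val + 1) / m - 1 = i.val
    rw [hev i, Nat.mul_div_cancel _ (by omega)]
    omega
  refine ⟨b, fun n => ?_⟩
  rw [ha n]
  congr 1
  have h1 : ∑ i : Fin k, a i * fd^[(i.val + 1) * m] S n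
      = ∑ i : Fin k, b (e i) * fd^[(e i).val + 1] S n := by
    refine Finset.sum_congr rfl fun i _ => ?_
    rw [hbe i, hev i]
  have h2 : ∑ i : Fin k, b (e i) * fd^[(e i).val + 1] S n
      = ∑ j ∈ Finset.univ.image e, b j * fd^[j.val + 1] S n :=
    (Finset.sum_image (f := fun j : Fin (k*m) => b j * fd^[j.val + 1] S n) (g := e)
      (fun x _ y _ hxy => hinj hxy)).symm
  rw [h1, h2]
  apply Finset.sum_subset (Finset.subset_univ _)
  intro j _ hj
  simp only [hbdef]
  rw [dif_neg]
  · exact zero_mul _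
  · intro hd
    apply hj
    obtain ⟨c, hc⟩ := hd
    obtain ⟨hc1, hck⟩ := hdiv j c hc
    refine Finset.mem_image.2 ⟨⟨c - 1, by omega⟩, Finset.mem_univ _, ?_⟩
    apply Fin.ext
    show (c - 1 + 1) * m - 1 = j.val
    have hcc : c - 1 + 1 = c := by omega
    rw [hcc, Nat.mul_comm]
    omega
end

section
/- Miura transformation to the extended discrete Lotka–Volterra equation: suppose the real numbers ε_j^{(n)} (for integers j ≥ −m and n ≥ 0) satisfy, for every k ≥ 0 and n ≥ 0, that the product ∏_{i=1}^{m} (ε_{k−m+i}^{(n+1)} − ε_{k−m+i}^{(n)}) is nonzero and ε_{k+1}^{(n)} = ε_{k−m}^{(n+1)} + [∏_{i=1}^{m} (ε_{k−m+i}^{(n+1)} − ε_{k−m+i}^{(n)})]^{−1}. Define b_j^{(n)} = ε_j^{(n+1)} − ε_j^{(n)} for j ≥ −m. Then for every integer k ≥ −m+1 and every n ≥ 0, ∏_{i=0}^{m−1} (b_{k+i}^{(n+1)})^{−1} − ∏_{i=0}^{m−1} (b_{k+i}^{(n)})^{−1} = b_{k+m}^{(n)} − b_{k−1}^{(n+1)}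 (this is the extended discrete Lotka–Volterra system, written in the variables a_{k−(m−1)/2}^{(n)} = 1/b_k^{(n)}). -/
/-- Miura transformation to the extended discrete Lotka–Volterra equation:
if the numbers `ε_j^{(n)}` (`j ≥ −m`) satisfy, for every `k, n ≥ 0`, that
`∏_{i=1}^m (ε_{k−m+i}^{(n+1)} − ε_{k−m+i}^{(n)})` is nonzero and
`ε_{k+1}^{(n)} = ε_{k−m}^{(n+1)} + [∏_{i=1}^m (ε_{k−m+i}^{(n+1)} − ε_{k−m+i}^{(n)})]⁻¹`,
and `b_j^{(n)} = ε_j^{(n+1)} − ε_j^{(n)}`, then for every integer `k ≥ −m+1` and `n ≥ 0`,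
`∏_{i=0}^{m−1} (b_{k+i}^{(n+1)})⁻¹ − ∏_{i=0}^{m−1} (b_{k+i}^{(n)})⁻¹
= b_{k+m}^{(n)} − b_{k−1}^{(n+1)}`
(the extended discrete Lotka–Volterra system in the variables
`a_{k−(m−1)/2}^{(n)} = 1/b_k^{(n)}`). -/
theorem stmt_19 (m : ℕ) (hm : 1 ≤ m) (eps : ℤ → ℕ → ℝ)
    (hrec : ∀ k n : ℕ,
      (∏ i ∈ Finset.Icc 1 m,
        (eps ((k : ℤ) - m + i) (n + 1) - eps ((k : ℤ) - m + i) n)) ≠ 0 ∧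
      eps ((k : ℤ) + 1) n = eps ((k : ℤ) - m) (n + 1) +
        (∏ i ∈ Finset.Icc 1 m,
          (eps ((k : ℤ) - m + i) (n + 1) - eps ((k : ℤ) - m + i) n))⁻¹)
    (b : ℤ → ℕ → ℝ) (hb : ∀ (j : ℤ) (n : ℕ), b j n = eps j (n + 1) - eps j n) :
    ∀ k : ℤ, -(m : ℤ) + 1 ≤ k → ∀ n : ℕ,
      (∏ i ∈ Finset.range m, (b (k + i) (n + 1))⁻¹) -
        (∏ i ∈ Finset.range m, (b (k + i) n)⁻¹) =
      b (k + m) n - b (k - 1) (n + 1) := by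
  intro k hk n
  obtain ⟨K, hK⟩ : ∃ K : ℕ, (K : ℤ) = k + m - 1 := ⟨(k + m - 1).toNat, by omega⟩
  have himg : Finset.Icc 1 m = Finset.image (· + 1) (Finset.range m) := by
    ext x
    simp only [Finset.mem_Icc, Finset.mem_image, Finset.mem_range]
    constructor
    · rintro ⟨h1, h2⟩; exact ⟨x - 1, by omega, by omega⟩
    · rintro ⟨a, ha, rfl⟩; omega
  have key : ∀ n : ℕ, (∏ i ∈ Finset.range m, b (k + i) n)⁻¹
      = eps (k + m) n - eps (k - 1) (n + 1) := by
    intro n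
    have h := hrec K n
    have hprod : (∏ i ∈ Finset.Icc 1 m,
        (eps ((K : ℤ) - m + i) (n + 1) - eps ((K : ℤ) - m + i) n))
        = ∏ i ∈ Finset.range m, b (k + i) n := by
      rw [himg, Finset.prod_image (by intro a _ c _ h; simp only at h; omega)]
      refine Finset.prod_congr rfl fun i _ => ?_
      have : (K : ℤ) - m + (i + 1 : ℕ) = k + i := by push_cast; omega
      rw [this, hb]
    have h2 := h.2
    rw [hprod] at h2
    have e1 : (K : ℤ) + 1 = k + m := by omega
    have e2 : (K : ℤ) - m = k - 1 := by omega
    rw [e1, e2] at h2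
    linarith
  have hne : ∀ n : ℕ, (∏ i ∈ Finset.range m, b (k + i) n) ≠ 0 := by
    intro n
    have h := (hrec K n).1
    have hprod : (∏ i ∈ Finset.Icc 1 m,
        (eps ((K : ℤ) - m + i) (n + 1) - eps ((K : ℤ) - m + i) n))
        = ∏ i ∈ Finset.range m, b (k + i) n := by
      rw [himg, Finset.prod_image (by intro a _ c _ h; simp only at h; omega)]
      refine Finset.prod_congr rfl fun i _ => ?_
      have : (K : ℤ) - m + (i + 1 : ℕ) = k + i := by push_cast; omega
      rw [this, hb]
    rwa [hprod] at h
  rw [Finset.prod_inv_distrib, Finset.prod_inv_distrib, key n, key (n + 1),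
    hb, hb]
  ring
end
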